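/- arXiv:1302.6045 — 4 statements merged into one kernel-verified Lean document; each statement's English description precedes it below -/
import Mathlib

section
/- Let C be a triangulated category admitting a bounded t-structure. Then C is idempotent complete, i.e. every idempotent endomorphism of an object of C splits. -/
/-!
STATEMENT 4.
A triangulated category admitting a bounded t-structure is idempotent complete.
-/

open CategoryTheory Limits Pretriangulated

namespace Stmt4

variable {C : Type u} [Category.{v} C] [HasZeroObject C] [Preadditive C] [HasShift C ℤ]
  [∀ n : ℤ, (shiftFunctor C n).Additive] [Pretriangulated C]

/-- A t-structure on a triangulated category `C`, given by its aisle `L = C^{≤0}` and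
co-aisle `G = C^{≥0}`, both strict (closed under isomorphisms) full subcategories. -/
structure IsTStructure (L G : Set C) : Prop where
  aisle_iso_closed : ∀ ⦃X Y : C⦄, (X ≅ Y) → X ∈ L → Y ∈ L
  coaisle_iso_closed : ∀ ⦃X Y : C⦄, (X ≅ Y) → X ∈ G → Y ∈ G
  shift_aisle : ∀ X ∈ L, (X⟦(1 : ℤ)⟧) ∈ L
  shift_coaisle : ∀ X ∈ G, (X⟦(-1 : ℤ)⟧) ∈ G
  hom_vanish : ∀ (X Y : C), X ∈ L → Y ∈ G → ∀ f : X ⟶ (Y⟦(-1 : ℤ)⟧), f = 0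
  exists_triangle : ∀ X : C, ∃ (M' M'' : C) (f : M' ⟶ X) (g : X ⟶ M'')
    (h : M'' ⟶ M'⟦(1 : ℤ)⟧), M' ∈ L ∧ (M''⟦(1 : ℤ)⟧) ∈ G ∧
      Triangle.mk f g h ∈ distTriang C

/-- Boundedness of a t-structure `(L, G)`:
`⋃ₙ Σⁿ L = C = ⋃ₙ Σⁿ G`. -/
def IsBoundedTStructure (L G : Set C) : Prop :=
  (∀ X : C, ∃ n : ℤ, (X⟦n⟧) ∈ L) ∧ (∀ X : C, ∃ n : ℤ, (X⟦n⟧) ∈ G)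

end Stmt4

open Stmt4

namespace Stmt4Proof

open Stmt4

variable {C : Type u} [Category.{v} C] [HasZeroObject C] [Preadditive C] [HasShift C ℤ]
  [∀ n : ℤ, (shiftFunctor C n).Additive] [Pretriangulated C]

def Le (L : Set C) (n : ℤ) (X : C) : Prop := (X⟦n⟧) ∈ L

def Ge (G : Set C) (n : ℤ) (X : C) : Prop := (X⟦n⟧) ∈ G

variable {L G : Set C}

lemma le_of_iso (ht : IsTStructure L G) {X Y : C} (e : X ≅ Y) {n : ℤ} (h : Le L n X) :
    Le L n Y :=
  ht.aisle_iso_closed ((shiftFunctor C n).mapIso e) h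

lemma ge_of_iso (ht : IsTStructure L G) {X Y : C} (e : X ≅ Y) {n : ℤ} (h : Ge G n X) :
    Ge G n Y :=
  ht.coaisle_iso_closed ((shiftFunctor C n).mapIso e) h

lemma le_shift_iff (ht : IsTStructure L G) (m n k : ℤ) (hmnk : m + n = k) (X : C) :
    Le L n (X⟦m⟧) ↔ Le L k X := by
  constructor
  · intro hx
    exact ht.aisle_iso_closed ((shiftFunctorAdd' C m n k hmnk).app X).symm hx
  · intro hx
    exact ht.aisle_iso_closed ((shiftFunctorAdd' C m n k hmnk).app X) hx

lemma ge_shift_iff (ht : IsTStructure L G) (m n k : ℤ) (hmnk : m + n = k) (X : C) :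
    Ge G n (X⟦m⟧) ↔ Ge G k X := by
  constructor
  · intro hx
    exact ht.coaisle_iso_closed ((shiftFunctorAdd' C m n k hmnk).app X).symm hx
  · intro hx
    exact ht.coaisle_iso_closed ((shiftFunctorAdd' C m n k hmnk).app X) hx

lemma le_succ (ht : IsTStructure L G) {X : C} {n : ℤ} (hX : Le L n X) : Le L (n + 1) X :=
  ht.aisle_iso_closed ((shiftFunctorAdd' C n 1 (n + 1) rfl).app X).symm
    (ht.shift_aisle _ hX)

lemma ge_pred (ht : IsTStructure L G) {X : C} {n : ℤ} (hX : Ge G n X) : Ge G (n - 1) X :=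
  ht.coaisle_iso_closed ((shiftFunctorAdd' C n (-1) (n - 1) (by omega)).app X).symm
    (ht.shift_coaisle _ hX)

lemma le_mono (ht : IsTStructure L G) {X : C} {n m : ℤ} (hnm : n ≤ m) (hX : Le L n X) :
    Le L m X := by
  have key : ∀ (k : ℕ), Le L n X → Le L (n + k) X := by
    intro k
    induction k with
    | zero => intro h; simpa using h
    | succ k ih =>
      intro h
      have h' := le_succ ht (ih h)
      rwa [show (n + (k : ℤ)) + 1 = n + ((k + 1 : ℕ) : ℤ) by push_cast; ring] at h'
  obtain ⟨k, hk⟩ := Int.le.dest hnm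
  rw [← hk]
  exact key k hX

lemma ge_anti (ht : IsTStructure L G) {X : C} {m n : ℤ} (hmn : m ≤ n) (hX : Ge G n X) :
    Ge G m X := by
  have key : ∀ (k : ℕ), Ge G (m + k) X → Ge G m X := by
    intro k
    induction k with
    | zero => intro h; simpa using h
    | succ k ih =>
      intro h
      have h' := ge_pred ht h
      have e : (m + ((k : ℤ) + 1)) - 1 = m + k := by ring
      rw [show ((k + 1 : ℕ) : ℤ) = (k : ℤ) + 1 by push_cast; ring, e] at h'
      exact ih h'
  obtain ⟨k, hk⟩ := Int.le.dest hmn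
  exact key k (by rwa [hk])

lemma hom_zero (ht : IsTStructure L G) {a b : ℤ} (hab : a < b) {X Y : C}
    (hX : Le L a X) (hY : Ge G b Y) (f : X ⟶ Y) : f = 0 := by
  have hZ : Ge G (a + 1) Y := ge_anti ht (by omega) hY
  set hiso := (shiftFunctorAdd' C (a + 1) (-1) a (by omega)).app Y with hisodef
  have h0 : f⟦a⟧' ≫ hiso.hom = 0 := ht.hom_vanish _ _ hX hZ _
  have h1 : f⟦a⟧' = 0 := by
    have := congrArg (fun z => z ≫ hiso.inv) h0
    simpa using this
  apply (shiftFunctor C a).map_injective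
  simpa using h1

lemma trunc (ht : IsTStructure L G) (X : C) (n : ℤ) :
    ∃ (A B : C) (f : A ⟶ X) (g : X ⟶ B) (w : B ⟶ A⟦(1 : ℤ)⟧),
      Le L n A ∧ Ge G (n + 1) B ∧ Triangle.mk f g w ∈ distTriang C := by
  obtain ⟨A₀, B₀, f, g, w, hA₀, hB₀, mem⟩ := ht.exists_triangle (X⟦n⟧)
  let T := (Triangle.shiftFunctor C (-n)).obj (Triangle.mk f g w)
  let e := (shiftEquiv C n).unitIso.symm.app X
  have hT' : Triangle.mk (T.mor₁ ≫ e.hom) (e.inv ≫ T.mor₂) T.mor₃ ∈ distTriang C := by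
    refine isomorphic_distinguished _ (Triangle.shift_distinguished _ mem (-n)) _ ?_
    refine Triangle.isoMk _ _ (Iso.refl _) e.symm (Iso.refl _) ?_ ?_ ?_
    · dsimp [T, Triangle.mk]; erw [Category.assoc, Iso.hom_inv_id, Category.comp_id, Category.id_comp]
    · dsimp [T, Triangle.mk]; simp; rfl
    · dsimp [T, Triangle.mk]; simp
  refine ⟨A₀⟦(-n : ℤ)⟧, B₀⟦(-n : ℤ)⟧, T.mor₁ ≫ e.hom, e.inv ≫ T.mor₂, T.mor₃, ?_, ?_, hT'⟩
  · rw [le_shift_iff ht (-n) n 0 (by omega)]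
    exact ht.aisle_iso_closed ((shiftFunctorZero C ℤ).app A₀).symm hA₀
  · rw [ge_shift_iff ht (-n) (n + 1) 1 (by omega)]
    exact hB₀


lemma le_ext (ht : IsTStructure L G) {T : Triangle C} (hT : T ∈ distTriang C) {n : ℤ}
    (h₁ : Le L n T.obj₁) (h₃ : Le L n T.obj₃) : Le L n T.obj₂ := by
  obtain ⟨X₁, X₂, u, π, w, hX₁, hX₂, hTr⟩ := trunc ht T.obj₂ n
  have hfπ : T.mor₁ ≫ π = 0 := hom_zero ht (by omega) h₁ hX₂ _
  obtain ⟨φ, hφ⟩ := Triangle.yoneda_exact₂ _ hT π hfπ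
  have hφ0 : φ = 0 := hom_zero ht (by omega) h₃ hX₂ φ
  have hπ0 : π = 0 := by rw [hφ, hφ0, comp_zero]
  obtain ⟨r, hr⟩ := Triangle.yoneda_exact₃ _ hTr (𝟙 X₂)
    (by erw [show (Triangle.mk u π w).mor₂ = π from rfl, hπ0, zero_comp])
  have hr0 : r = 0 := hom_zero ht (show n - 1 < n + 1 by omega)
    ((le_shift_iff ht 1 (n - 1) n (by omega) X₁).mpr hX₁) hX₂ r
  have hzero : IsZero X₂ := by
    rw [IsZero.iff_id_eq_zero, hr, hr0, comp_zero]; rfl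
  have hiso : IsIso u := (Triangle.isZero₃_iff_isIso₁ _ hTr).1 hzero
  exact le_of_iso ht (asIso u) hX₁

lemma ge_ext (ht : IsTStructure L G) {T : Triangle C} (hT : T ∈ distTriang C) {n : ℤ}
    (h₁ : Ge G n T.obj₁) (h₃ : Ge G n T.obj₃) : Ge G n T.obj₂ := by
  obtain ⟨X₁, X₂, u, π, w, hX₁, hX₂', hTr⟩ := trunc ht T.obj₂ (n - 1)
  have hX₂ : Ge G n X₂ := by rwa [show n - 1 + 1 = n by omega] at hX₂'
  have hug : u ≫ T.mor₂ = 0 := hom_zero ht (by omega) hX₁ h₃ _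
  obtain ⟨ψ, hψ⟩ := Triangle.coyoneda_exact₂ _ hT u hug
  have hψ0 : ψ = 0 := hom_zero ht (by omega) hX₁ h₁ ψ
  have hu0 : u = 0 := by rw [hψ, hψ0, zero_comp]
  obtain ⟨r, hr⟩ := Triangle.coyoneda_exact₂ _ (inv_rot_of_distTriang _ hTr) (𝟙 X₁)
    (by
      show 𝟙 X₁ ≫ (Triangle.mk u π w).invRotate.mor₂ = 0
      erw [Category.id_comp]
      exact hu0)
  have hr0 : r = 0 := hom_zero ht (show n - 1 < n + 1 by omega) hX₁
    ((ge_shift_iff ht (-1) (n + 1) n (by omega) X₂).mpr hX₂) r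
  have hzero : IsZero X₁ := by rw [IsZero.iff_id_eq_zero, hr, hr0, zero_comp]; rfl
  have hiso : IsIso π := (Triangle.isZero₁_iff_isIso₂ _ hTr).1 hzero
  exact ge_of_iso ht (asIso π).symm hX₂


lemma split_base (ht : IsTStructure L G) {X : C} {a : ℤ}
    (hle : Le L a X) (hge : Ge G a X) (p : X ⟶ X) (hp : p ≫ p = p) :
    ∃ (Y : C) (i : Y ⟶ X) (e : X ⟶ Y), i ≫ e = 𝟙 Y ∧ e ≫ i = p := by
  obtain ⟨Z, g, w, hTz⟩ := distinguished_cocone_triangle (𝟙 X - p)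
  set T₂ := (Triangle.mk (𝟙 X - p) g w).invRotate with hT₂def
  have hT₂ : T₂ ∈ distTriang C := inv_rot_of_distTriang _ hTz
  obtain ⟨K, Q, ι, πq, wq, hK, hQ, hTq⟩ := trunc ht T₂.obj₁ a
  have hαf : T₂.mor₁ ≫ T₂.mor₂ = 0 := comp_distTriang_mor_zero₁₂ _ hT₂
  have hT₂mor₂ : T₂.mor₂ = 𝟙 X - p := rfl
  have hpf : p ≫ T₂.mor₂ = 0 := by erw [hT₂mor₂, Preadditive.comp_sub, Category.comp_id, hp, sub_self]
  obtain ⟨u, hu⟩ := Triangle.coyoneda_exact₂ _ hT₂ p hpf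
  have huπ : u ≫ πq = 0 := hom_zero ht (by omega) hle hQ _
  obtain ⟨q₀, hq₀⟩ := Triangle.coyoneda_exact₂ _ hTq u huπ
  simp only [Triangle.mk_mor₁] at hq₀
  obtain ⟨q, hqq⟩ : ∃ q : X ⟶ K, q = q₀ := ⟨q₀, rfl⟩
  have hq : u = q ≫ ι := by rw [hqq]; exact hq₀
  obtain ⟨kk, hkk⟩ : ∃ kk : K ⟶ X, kk = ι ≫ T₂.mor₁ := ⟨ι ≫ T₂.mor₁, rfl⟩
  have hkf : kk ≫ T₂.mor₂ = 0 := by erw [hkk, Category.assoc, hαf, comp_zero]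
  have hkp : kk ≫ p = kk := by
    have h0 : kk ≫ (𝟙 X - p) = 0 := by rw [← hT₂mor₂]; exact hkf
    rw [Preadditive.comp_sub, Category.comp_id, sub_eq_zero] at h0
    exact h0.symm
  have hqk : q ≫ kk = p := by erw [hkk, ← Category.assoc, ← hq, ← hu]
  have cancel : ∀ gK : K ⟶ K, gK ≫ kk = 0 → gK = 0 := by
    intro gK hgK
    have h1 : (gK ≫ ι) ≫ T₂.mor₁ = 0 := by rw [Category.assoc, ← hkk]; exact hgK
    obtain ⟨v, hv⟩ := Triangle.coyoneda_exact₂ _ (inv_rot_of_distTriang _ hT₂) (gK ≫ ι)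
      (by exact h1)
    have hv0 : v = 0 := hom_zero ht (show a < a + 1 by omega) hK
      ((ge_shift_iff ht (-1) (a + 1) a (by omega) X).mpr hge) v
    have hgι : gK ≫ ι = 0 := by erw [hv, hv0, zero_comp]; rfl
    obtain ⟨v', hv'⟩ := Triangle.coyoneda_exact₂ _ (inv_rot_of_distTriang _ hTq) gK
      (by exact hgι)
    have hv'0 : v' = 0 := hom_zero ht (show a < a + 2 by omega) hK
      ((ge_shift_iff ht (-1) (a + 2) (a + 1) (by omega) Q).mpr hQ) v'
    rw [hv', hv'0, zero_comp]; rfl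
  have hcan : (kk ≫ q - 𝟙 K) ≫ kk = 0 := by
    rw [Preadditive.sub_comp, Category.id_comp, Category.assoc, hqk, hkp, sub_self]
  have hqk1 : kk ≫ q = 𝟙 K := by
    have h0 := cancel _ hcan
    rwa [sub_eq_zero] at h0
  exact ⟨K, kk, q, hqk1, hqk⟩


lemma split_main (ht : IsTStructure L G) :
    ∀ (k : ℕ) {X : C} {a : ℤ}, Le L a X → Ge G (a - k) X →
    ∀ (p : X ⟶ X), p ≫ p = p →
    ∃ (Y : C) (i : Y ⟶ X) (e : X ⟶ Y), i ≫ e = 𝟙 Y ∧ e ≫ i = p := by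
  intro k
  induction k with
  | zero =>
    intro X a hle hge p hp
    exact split_base ht hle (by simpa using hge) p hp
  | succ k ih =>
    intro X a hle hge p hp
    obtain ⟨A, B, ι, π, δ, hA, hB, hTX⟩ := trunc ht X (a - 1)
    have hTXd := hTX
    have hB' : Ge G a B := by rwa [show a - 1 + 1 = a by omega] at hB
    -- the windows of A and B
    have hgeA : Ge G (a - 1 - k) A := by
      refine ge_ext ht (inv_rot_of_distTriang _ hTX) ?_ ?_
      · exact (ge_shift_iff ht (-1) (a - 1 - k) (a - 2 - k) (by omega) B).mpr
          (ge_anti ht (by omega) hB')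
      · show Ge G (a - 1 - k) X
        rwa [show a - ((k + 1 : ℕ) : ℤ) = a - 1 - (k : ℤ) by push_cast; ring] at hge
    have hleB : Le L a B := by
      refine le_ext ht (rot_of_distTriang _ hTX) ?_ ?_
      · exact hle
      · exact (le_shift_iff ht 1 a (1 + a) rfl A).mpr (le_mono ht (by omega) hA)
    -- induced idempotents on A and B
    have hAB0 : ∀ f : A ⟶ B, f = 0 := fun f =>
      hom_zero ht (show a - 1 < a by omega) hA hB' f
    have hιπ : ι ≫ π = 0 := comp_distTriang_mor_zero₁₂ _ hTX
    obtain ⟨pA, hpA⟩ := Triangle.coyoneda_exact₂ _ hTX (ι ≫ p) (hAB0 _)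
    simp only [Triangle.mk_mor₁, Triangle.mk_mor₂] at hpA
    obtain ⟨pB, hpB⟩ := Triangle.yoneda_exact₂ _ hTX (p ≫ π)
      (by
        show ι ≫ p ≫ π = 0
        erw [← Category.assoc, hpA, Category.assoc, hιπ, comp_zero])
    simp only [Triangle.mk_mor₁, Triangle.mk_mor₂] at hpB
    obtain ⟨pA', hpA'eq⟩ : ∃ q : A ⟶ A, q = pA := ⟨pA, rfl⟩
    obtain ⟨pB', hpB'eq⟩ : ∃ q : B ⟶ B, q = pB := ⟨pB, rfl⟩
    rw [← hpA'eq] at hpA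
    rw [← hpB'eq] at hpB
    clear hpA'eq hpB'eq pA pB
    -- cancellation
    have monoA : ∀ f : A ⟶ A, f ≫ ι = 0 → f = 0 := by
      intro f hf
      obtain ⟨v, hv⟩ := Triangle.coyoneda_exact₂ _ (inv_rot_of_distTriang _ hTX) f (by exact hf)
      erw [hv, hom_zero ht (show a - 1 < a + 1 by omega) hA
        ((ge_shift_iff ht (-1) (a + 1) a (by omega) B).mpr hB') v, zero_comp]; rfl
    have epiB : ∀ f : B ⟶ B, π ≫ f = 0 → f = 0 := by
      intro f hf
      obtain ⟨v, hv⟩ := Triangle.yoneda_exact₂ _ (rot_of_distTriang _ hTX) f (by exact hf)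
      erw [hv, hom_zero ht (show a - 2 < a by omega)
        ((le_shift_iff ht 1 (a - 2) (a - 1) (by omega) A).mpr hA) hB' v, comp_zero]; rfl
    -- pA', pB' are idempotent
    have hpAidem : pA' ≫ pA' = pA' := by
      refine sub_eq_zero.mp (monoA _ ?_)
      have e1 : pA' ≫ pA' ≫ ι = pA' ≫ ι := by
        erw [← hpA, ← Category.assoc, ← hpA, Category.assoc, hp]; rfl
      rw [Preadditive.sub_comp, Category.assoc, e1, sub_self]
    have hpBidem : pB' ≫ pB' = pB' := by
      refine sub_eq_zero.mp (epiB _ ?_)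
      have e1 : π ≫ pB' ≫ pB' = π ≫ pB' := by
        erw [← Category.assoc, ← hpB, Category.assoc, ← hpB, ← Category.assoc, hp, hpB]
      rw [Preadditive.comp_sub, e1, sub_self]
    -- third square
    obtain ⟨c, hc₁, hc₂⟩ := complete_distinguished_triangle_morphism _ _ hTX hTX pA' p hpA
    simp only [Triangle.mk_mor₂, Triangle.mk_mor₃] at hc₁ hc₂
    have hcB : c = pB' := by
      refine sub_eq_zero.mp (epiB _ ?_)
      erw [Preadditive.comp_sub, hc₁, hpB, sub_self]
    have hthird : δ ≫ pA'⟦(1 : ℤ)⟧' = pB' ≫ δ := by rw [← hcB]; exact hc₂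
    -- split A and B
    obtain ⟨Y₁, i₁, r₁, hir₁, hri₁⟩ := ih hA hgeA pA' hpAidem
    obtain ⟨Y₂, i₂, r₂, hir₂, hri₂⟩ := split_base ht hleB hB' pB' hpBidem
    have hi₂pB : i₂ ≫ pB' = i₂ := by
      rw [← hri₂, ← Category.assoc, hir₂, Category.id_comp]
    have hpAr₁ : pA' ≫ r₁ = r₁ := by
      rw [← hri₁, Category.assoc, hir₁, Category.comp_id]
    -- glued triangle
    obtain ⟨Y, u, v, hTY⟩ := distinguished_cocone_triangle₂ (i₂ ≫ δ ≫ r₁⟦(1 : ℤ)⟧')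
    obtain ⟨s₀, hs₁₀, hs₂₀⟩ := complete_distinguished_triangle_morphism₂ _ _ hTY hTX i₁ i₂ (by
      show (i₂ ≫ δ ≫ r₁⟦(1 : ℤ)⟧') ≫ i₁⟦(1 : ℤ)⟧' = i₂ ≫ δ
      rw [Category.assoc, Category.assoc, ← Functor.map_comp, hri₁, hthird,
        ← Category.assoc, hi₂pB])
    obtain ⟨s, hseq⟩ : ∃ s' : Y ⟶ X, s' = s₀ := ⟨s₀, rfl⟩
    have hs₁ : u ≫ s = i₁ ≫ ι := by rw [hseq]; exact hs₁₀
    have hs₂ : v ≫ i₂ = s ≫ π := by rw [hseq]; exact hs₂₀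
    obtain ⟨t₀, ht₁₀, ht₂₀⟩ := complete_distinguished_triangle_morphism₂ _ _ hTX hTY r₁ r₂ (by
      show δ ≫ r₁⟦(1 : ℤ)⟧' = r₂ ≫ i₂ ≫ δ ≫ r₁⟦(1 : ℤ)⟧'
      rw [← Category.assoc r₂ i₂, hri₂, ← Category.assoc pB' δ, ← hthird,
        Category.assoc, ← Functor.map_comp, hpAr₁])
    obtain ⟨t, hteq⟩ : ∃ t' : X ⟶ Y, t' = t₀ := ⟨t₀, rfl⟩
    have ht₁ : ι ≫ t = r₁ ≫ u := by rw [hteq]; exact ht₁₀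
    have ht₂ : π ≫ r₂ = t ≫ v := by rw [hteq]; exact ht₂₀
    -- hs₁ : u ≫ s = i₁ ≫ ι ; hs₂ : v ≫ i₂ = s ≫ π
    -- ht₁ : ι ≫ t = r₁ ≫ u ; ht₂ : π ≫ r₂ = t ≫ v
    have hug : u ≫ (s ≫ t) = u := by
      rw [← Category.assoc, hs₁, Category.assoc, ht₁, ← Category.assoc, hir₁,
        Category.id_comp]
    have hgv : (s ≫ t) ≫ v = v := by
      rw [Category.assoc, ← ht₂, ← Category.assoc, ← hs₂, Category.assoc, hir₂,
        Category.comp_id]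
    have hu0 : u ≫ (s ≫ t - 𝟙 Y) = 0 := by
      rw [Preadditive.comp_sub, hug, Category.comp_id, sub_self]
    have hv0 : (s ≫ t - 𝟙 Y) ≫ v = 0 := by
      rw [Preadditive.sub_comp, hgv, Category.id_comp, sub_self]
    obtain ⟨ρ, hρ⟩ := Triangle.coyoneda_exact₂ _ hTY (s ≫ t - 𝟙 Y) hv0
    simp only [Triangle.mk_mor₁] at hρ
    have hnn : (s ≫ t - 𝟙 Y) ≫ (s ≫ t - 𝟙 Y) = 0 := by
      erw [hρ, Category.assoc, ← hρ, hu0, comp_zero]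
    obtain ⟨nn, hnndef⟩ : ∃ n' : Y ⟶ Y, n' = s ≫ t - 𝟙 Y := ⟨_, rfl⟩
    have hu0' : u ≫ nn = 0 := by rw [hnndef]; exact hu0
    have hv0' : nn ≫ v = 0 := by rw [hnndef]; exact hv0
    have hnn' : nn ≫ nn = 0 := by rw [hnndef]; exact hnn
    have e0 : s ≫ t = 𝟙 Y + nn := by rw [hnndef]; abel
    obtain ⟨gInv, hgInvdef⟩ : ∃ g' : Y ⟶ Y, g' = 𝟙 Y - nn := ⟨_, rfl⟩
    have hg1 : (s ≫ t) ≫ nn = nn := by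
      rw [e0, Preadditive.add_comp, Category.id_comp, hnn', add_zero]
    have h1g : nn ≫ (s ≫ t) = nn := by
      rw [e0, Preadditive.comp_add, Category.comp_id, hnn', add_zero]
    have hggInv : (s ≫ t) ≫ gInv = 𝟙 Y := by
      rw [hgInvdef, Preadditive.comp_sub, Category.comp_id, hg1, e0, add_sub_cancel_right]
    have hgInvg : gInv ≫ (s ≫ t) = 𝟙 Y := by
      rw [hgInvdef, Preadditive.sub_comp, Category.id_comp, h1g, e0, add_sub_cancel_right]
    have hugInv : u ≫ gInv = u := by
      rw [hgInvdef, Preadditive.comp_sub, Category.comp_id, hu0', sub_zero]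
    have hgInvv : gInv ≫ v = v := by
      rw [hgInvdef, Preadditive.sub_comp, Category.id_comp, hv0', sub_zero]
    -- the idempotent E
    set E := t ≫ gInv ≫ s with hE
    have hιE : ι ≫ E = ι ≫ p := by
      erw [hE, ← Category.assoc ι t (gInv ≫ s), ht₁, Category.assoc r₁ u (gInv ≫ s),
        ← Category.assoc u gInv s, hugInv, hs₁, ← Category.assoc r₁ i₁ ι, hri₁, ← hpA]; rfl
    have hEπ : E ≫ π = p ≫ π := by
      erw [hE, Category.assoc t (gInv ≫ s) π, Category.assoc gInv s π, ← hs₂,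
        ← Category.assoc gInv v i₂, hgInvv, ← Category.assoc t v i₂, ← ht₂,
        Category.assoc π r₂ i₂, hri₂, ← hpB]; rfl
    have hEE : E ≫ E = E := by
      rw [hE]
      simp only [Category.assoc]
      rw [← Category.assoc s t (gInv ≫ s), ← Category.assoc (s ≫ t) gInv s, hggInv,
        Category.id_comp]
    obtain ⟨d, hddef⟩ : ∃ d' : X ⟶ X, d' = E - p := ⟨_, rfl⟩
    have hEpd : E = p + d := by rw [hddef]; abel
    have hιd : ι ≫ d = 0 := by rw [hddef, Preadditive.comp_sub, hιE, sub_self]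
    have hdπ : d ≫ π = 0 := by rw [hddef, Preadditive.sub_comp, hEπ, sub_self]
    obtain ⟨τ, hτ⟩ := Triangle.coyoneda_exact₂ _ hTX d hdπ
    simp only [Triangle.mk_mor₁] at hτ
    have hdd : d ≫ d = 0 := by
      erw [hτ, Category.assoc, ← hτ, hιd, comp_zero]
    have hsplit : p ≫ d + d ≫ p = d := by
      have h := hEE
      rw [hEpd, Preadditive.add_comp, Preadditive.comp_add, Preadditive.comp_add,
        hp, hdd] at h
      have h2 : p + (p ≫ d + d ≫ p) = p + d := by rw [← h]; abel
      exact add_left_cancel h2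
    have hpd1 : p ≫ d = d - d ≫ p := eq_sub_of_add_eq hsplit
    have hdp1 : d ≫ p = d - p ≫ d := eq_sub_of_add_eq ((add_comm _ _).trans hsplit)
    have hpdp : p ≫ d ≫ p = 0 := by
      rw [← Category.assoc, hpd1, Preadditive.sub_comp, Category.assoc, hp, sub_self]
    have hdpd : d ≫ p ≫ d = 0 := by
      rw [hpd1, Preadditive.comp_sub, hdd, ← Category.assoc, hdd, zero_comp, sub_self]
    -- auxiliary products
    have hdpp : (d ≫ p) ≫ p = d ≫ p := by rw [Category.assoc, hp]
    have hpdp' : (p ≫ d) ≫ p = 0 := by rw [Category.assoc, hpdp]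
    have hppd : p ≫ (p ≫ d) = p ≫ d := by rw [← Category.assoc, hp]
    have hddp : d ≫ (d ≫ p) = 0 := by rw [← Category.assoc, hdd, zero_comp]
    have hxx : (d ≫ p) ≫ (d ≫ p) = 0 := by
      rw [Category.assoc d p (d ≫ p), hpdp, comp_zero]
    have hxy : (d ≫ p) ≫ (p ≫ d) = 0 := by
      rw [Category.assoc d p (p ≫ d), ← Category.assoc p p d, hp, hdpd]
    have hyx : (p ≫ d) ≫ (d ≫ p) = 0 := by
      rw [Category.assoc p d (d ≫ p), ← Category.assoc d d p, hdd, zero_comp, comp_zero]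
    have hyy : (p ≫ d) ≫ (p ≫ d) = 0 := by
      rw [Category.assoc p d (p ≫ d), hdpd, comp_zero]
    obtain ⟨uu, huudef⟩ : ∃ w' : X ⟶ X, w' = 𝟙 X + d ≫ p - p ≫ d := ⟨_, rfl⟩
    obtain ⟨uuInv, huuInvdef⟩ : ∃ w' : X ⟶ X, w' = 𝟙 X - d ≫ p + p ≫ d := ⟨_, rfl⟩
    have huup : uu ≫ p = E ≫ uu := by
      rw [huudef, hEpd]
      simp only [Preadditive.add_comp, Preadditive.sub_comp, Preadditive.comp_add,
        Preadditive.comp_sub, Category.id_comp, Category.comp_id, hp, hdd, hpdp, hdpd,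
        hdpp, hpdp', hppd, hddp, zero_comp, comp_zero, add_zero, sub_zero, zero_add]
      rw [hdp1]
      abel
    have huuInv₁ : uu ≫ uuInv = 𝟙 X := by
      rw [huudef, huuInvdef]
      simp only [Preadditive.add_comp, Preadditive.sub_comp, Preadditive.comp_add,
        Preadditive.comp_sub, Category.id_comp, Category.comp_id, hxx, hxy, hyx, hyy,
        zero_comp, comp_zero, add_zero, sub_zero, zero_add, zero_sub, sub_self]
      abel
    have huuInv₂ : uuInv ≫ uu = 𝟙 X := by
      rw [huudef, huuInvdef]
      simp only [Preadditive.add_comp, Preadditive.sub_comp, Preadditive.comp_add,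
        Preadditive.comp_sub, Category.id_comp, Category.comp_id, hxx, hxy, hyx, hyy,
        zero_comp, comp_zero, add_zero, sub_zero, zero_add, zero_sub, sub_self]
      abel
    refine ⟨Y, s ≫ uu, uuInv ≫ t ≫ gInv, ?_, ?_⟩
    · rw [Category.assoc, ← Category.assoc uu uuInv (t ≫ gInv), huuInv₁,
        Category.id_comp, ← Category.assoc s t gInv, hggInv]
    · rw [Category.assoc uuInv (t ≫ gInv) (s ≫ uu), Category.assoc t gInv (s ≫ uu),
        ← Category.assoc gInv s uu, ← Category.assoc t (gInv ≫ s) uu]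
      rw [show t ≫ gInv ≫ s = E from hE.symm, ← huup, ← Category.assoc uuInv uu p,
        huuInv₂, Category.id_comp]


end Stmt4Proof

theorem stmt4 {C : Type u} [Category.{v} C] [HasZeroObject C] [Preadditive C] [HasShift C ℤ]
    [∀ n : ℤ, (shiftFunctor C n).Additive] [Pretriangulated C]
    (L G : Set C) (h : IsTStructure L G) (hb : IsBoundedTStructure L G) :
    IsIdempotentComplete C := by
  constructor
  intro X p hp
  obtain ⟨n, hn⟩ := hb.1 X
  obtain ⟨m, hm⟩ := hb.2 X
  by_cases hc : m ≤ n
  · have hk : (n - ((n - m).toNat : ℤ)) = m := by omega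
    exact Stmt4Proof.split_main h ((n - m).toNat) hn (by rw [hk]; exact hm) p hp
  · have h10 : 𝟙 X = 0 := Stmt4Proof.hom_zero h (show n < m by omega) hn hm (𝟙 X)
    have hp0 : p = 0 := by rw [← Category.comp_id p, h10, comp_zero]
    exact ⟨X, 𝟙 X, 𝟙 X, by simp, by rw [hp0, h10]; simp⟩
end

section
/- A bounded t-structure on a triangulated category C is determined by its heart: if two bounded t-structures on C have the same heart, they are equal. Moreover, the aisle C^{≤0} of a bounded t-structure is the smallest strict full subcategory of C containing the heart and closed under Σ, extensions and direct summands, and the co-aisle C^{≥0} is the smallest strict full subcategory containing the heart and closed under Σ⁻¹, extensions and direct summands. -/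
/-!
STATEMENT 6.
A bounded t-structure is determined by its heart; moreover the aisle is the smallest
strict full subcategory containing the heart and closed under `Σ`, extensions and direct
summands, and dually for the co-aisle.
-/

open CategoryTheory Limits Pretriangulated

namespace Stmt6

variable {C : Type u} [Category.{v} C] [HasZeroObject C] [Preadditive C] [HasShift C ℤ]
  [∀ n : ℤ, (shiftFunctor C n).Additive] [Pretriangulated C]

/-- A t-structure on `C` given by its aisle `L` and co-aisle `G`. -/
structure IsTStructure (L G : Set C) : Prop where
  aisle_iso_closed : ∀ ⦃X Y : C⦄, (X ≅ Y) → X ∈ L → Y ∈ L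
  coaisle_iso_closed : ∀ ⦃X Y : C⦄, (X ≅ Y) → X ∈ G → Y ∈ G
  shift_aisle : ∀ X ∈ L, (X⟦(1 : ℤ)⟧) ∈ L
  shift_coaisle : ∀ X ∈ G, (X⟦(-1 : ℤ)⟧) ∈ G
  hom_vanish : ∀ (X Y : C), X ∈ L → Y ∈ G → ∀ f : X ⟶ (Y⟦(-1 : ℤ)⟧), f = 0
  exists_triangle : ∀ X : C, ∃ (M' M'' : C) (f : M' ⟶ X) (g : X ⟶ M'')
    (h : M'' ⟶ M'⟦(1 : ℤ)⟧), M' ∈ L ∧ (M''⟦(1 : ℤ)⟧) ∈ G ∧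
      Triangle.mk f g h ∈ distTriang C

/-- Boundedness of a t-structure `(L, G)`. -/
def IsBoundedTStructure (L G : Set C) : Prop :=
  (∀ X : C, ∃ n : ℤ, (X⟦n⟧) ∈ L) ∧ (∀ X : C, ∃ n : ℤ, (X⟦n⟧) ∈ G)

/-- `S` is a strict full subcategory closed under the given shift `n`, extensions and
direct summands. -/
structure IsClosedShiftExtSummands (S : Set C) (n : ℤ) : Prop where
  iso_closed : ∀ ⦃X Y : C⦄, (X ≅ Y) → X ∈ S → Y ∈ S
  shift : ∀ X ∈ S, (X⟦n⟧) ∈ S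
  ext : ∀ (X Y Z : C) (f : X ⟶ Y) (g : Y ⟶ Z) (h : Z ⟶ X⟦(1 : ℤ)⟧),
    Triangle.mk f g h ∈ (distTriang C) → X ∈ S → Z ∈ S → Y ∈ S
  summand : ∀ (X Y : C) (s : X ⟶ Y) (r : Y ⟶ X), s ≫ r = 𝟙 X → Y ∈ S → X ∈ S

end Stmt6

open Stmt6

namespace Stmt6Aux

variable {C : Type u} [Category.{v} C] [HasZeroObject C] [Preadditive C] [HasShift C ℤ]
  [∀ n : ℤ, (shiftFunctor C n).Additive] [Pretriangulated C]

open Stmt6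

lemma shiftDistEx (T : Triangle C) (hT : T ∈ distTriang C) (n : ℤ) :
    ∃ (f : T.obj₁⟦n⟧ ⟶ T.obj₂⟦n⟧) (g : T.obj₂⟦n⟧ ⟶ T.obj₃⟦n⟧)
      (k : T.obj₃⟦n⟧ ⟶ T.obj₁⟦n⟧⟦(1 : ℤ)⟧), Triangle.mk f g k ∈ distTriang C :=
  ⟨_, _, _, Triangle.shift_distinguished T hT n⟩

section IsoClosed

variable {S : Set C} (hiso : ∀ ⦃X Y : C⦄, (X ≅ Y) → X ∈ S → Y ∈ S)
include hiso

lemma mem_shift_shift_iff (X : C) (a b c : ℤ) (hc : a + b = c) :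
    X⟦a⟧⟦b⟧ ∈ S ↔ X⟦c⟧ ∈ S := by
  have e : X⟦c⟧ ≅ X⟦a⟧⟦b⟧ := (shiftFunctorAdd' C a b c hc).app X
  exact ⟨fun hx => hiso e.symm hx, fun hx => hiso e hx⟩

lemma mem_shift_zero_iff (X : C) : X⟦(0 : ℤ)⟧ ∈ S ↔ X ∈ S := by
  have e : X⟦(0 : ℤ)⟧ ≅ X := (shiftFunctorZero C ℤ).app X
  exact ⟨fun hx => hiso e hx, fun hx => hiso e.symm hx⟩

lemma mem_shift_congr (X : C) (a b : ℤ) (hab : a = b) (hx : X⟦a⟧ ∈ S) : X⟦b⟧ ∈ S := by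
  subst hab; exact hx

end IsoClosed

variable {L G : Set C}

lemma L_mono (h : IsTStructure L G) {X : C} {k m : ℤ} (hkm : k ≤ m) (hX : X⟦k⟧ ∈ L) :
    X⟦m⟧ ∈ L := by
  obtain ⟨n, rfl⟩ := Int.le.dest hkm
  induction n with
  | zero => exact mem_shift_congr h.aisle_iso_closed X k _ (by simp) hX
  | succ n ih =>
    have h1 : X⟦k + (n : ℤ)⟧⟦(1 : ℤ)⟧ ∈ L := h.shift_aisle _ (ih (by omega))
    rw [mem_shift_shift_iff h.aisle_iso_closed X _ _ (k + ((n : ℤ) + 1)) (by ring)] at h1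
    exact mem_shift_congr h.aisle_iso_closed X _ _ (by push_cast; ring) h1

lemma G_anti (h : IsTStructure L G) {X : C} {k m : ℤ} (hkm : k ≤ m) (hX : X⟦m⟧ ∈ G) :
    X⟦k⟧ ∈ G := by
  obtain ⟨n, rfl⟩ := Int.le.dest hkm
  clear hkm
  induction n with
  | zero => exact mem_shift_congr h.coaisle_iso_closed X _ k (by simp) hX
  | succ n ih =>
    apply ih
    have h1 : X⟦k + ((n : ℤ) + 1)⟧⟦(-1 : ℤ)⟧ ∈ G := by
      refine h.shift_coaisle _ (mem_shift_congr h.coaisle_iso_closed X _ _ (by push_cast; ring) hX)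
    rw [mem_shift_shift_iff h.coaisle_iso_closed X _ _ (k + (n : ℤ)) (by ring)] at h1
    exact h1

lemma homZero (h : IsTStructure L G) {X Y : C} {a b : ℤ} (hX : X⟦a⟧ ∈ L) (hY : Y⟦b⟧ ∈ G)
    (hab : a < b) (f : X ⟶ Y) : f = 0 := by
  have hY' : Y⟦a + 1⟧ ∈ G := G_anti h (by omega) hY
  have e : Y⟦a⟧ ≅ (Y⟦a + 1⟧)⟦(-1 : ℤ)⟧ := (shiftFunctorAdd' C (a + 1) (-1) a (by ring)).app Y
  have h0 : f⟦a⟧' ≫ e.hom = 0 := h.hom_vanish _ _ hX hY' _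
  have h1 : f⟦a⟧' = 0 := by
    rw [← cancel_mono e.hom, h0, zero_comp]
  refine (shiftFunctor C a).map_injective ?_
  simpa using h1

/-- vanishing `Hom(L, C^{≥1}) = 0`. -/
lemma homZero₁ (h : IsTStructure L G) {X Y : C} (hX : X ∈ L) (hY : Y⟦(1 : ℤ)⟧ ∈ G)
    (f : X ⟶ Y) : f = 0 :=
  homZero h (a := 0) (b := 1) ((mem_shift_zero_iff h.aisle_iso_closed X).2 hX) hY (by omega) f

lemma mem_aisle_iff (h : IsTStructure L G) (X : C) :
    X ∈ L ↔ ∀ (Y : C), Y⟦(1 : ℤ)⟧ ∈ G → ∀ f : X ⟶ Y, f = 0 := by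
  constructor
  · intro hX Y hY f
    exact homZero₁ h hX hY f
  · intro hX
    obtain ⟨A, B, a, b, c, hA, hB, hT⟩ := h.exists_triangle X
    have hb0 : b = 0 := hX B hB b
    obtain ⟨k, hk⟩ := Triangle.yoneda_exact₃ _ hT (𝟙 B) (by simp [hb0]; exact zero_comp)
    have hk0 : k = 0 := homZero₁ h (h.shift_aisle _ hA) hB k
    rw [hk0, comp_zero] at hk
    have hBz : IsZero B := (IsZero.iff_id_eq_zero B).2 hk
    have : IsIso a := (Triangle.isZero₃_iff_isIso₁ _ hT).1 hBz
    exact h.aisle_iso_closed (asIso a) hA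

lemma mem_coaisle_iff (h : IsTStructure L G) (Y : C) :
    Y ∈ G ↔ ∀ (X : C), X ∈ L → ∀ f : X ⟶ Y⟦(-1 : ℤ)⟧, f = 0 := by
  constructor
  · intro hY X hX f
    exact h.hom_vanish _ _ hX hY f
  · intro hY
    obtain ⟨A, B, a, b, c, hA, hB, hT⟩ := h.exists_triangle (Y⟦(-1 : ℤ)⟧)
    have ha0 : a = 0 := hY A hA a
    obtain ⟨v, hv⟩ := Triangle.coyoneda_exact₂ _
      (inv_rot_of_distTriang _ hT) (𝟙 A) (by simp [ha0]; exact comp_zero)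
    have hv0 : v = 0 := by
      refine homZero h (a := 0) (b := 2)
        ((mem_shift_zero_iff h.aisle_iso_closed A).2 hA) ?_ (by omega) v
      exact (mem_shift_shift_iff h.coaisle_iso_closed B (-1) 2 1 (by ring)).2 hB
    rw [hv0, zero_comp] at hv
    have hAz : IsZero A := (IsZero.iff_id_eq_zero A).2 hv
    have : IsIso b := (Triangle.isZero₁_iff_isIso₂ _ hT).1 hAz
    have h1 : (Y⟦(-1 : ℤ)⟧)⟦(1 : ℤ)⟧ ∈ G :=
      h.coaisle_iso_closed ((shiftFunctor C (1 : ℤ)).mapIso (asIso b)).symm hB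
    rw [mem_shift_shift_iff h.coaisle_iso_closed Y (-1) 1 0 (by ring)] at h1
    exact (mem_shift_zero_iff h.coaisle_iso_closed Y).1 h1

lemma extL (h : IsTStructure L G) {T : Triangle C} (hT : T ∈ distTriang C)
    (h₁ : T.obj₁ ∈ L) (h₃ : T.obj₃ ∈ L) : T.obj₂ ∈ L := by
  rw [mem_aisle_iff h]
  intro Y hY f
  obtain ⟨v, hv⟩ := Triangle.yoneda_exact₂ _ hT f (homZero₁ h h₁ hY _)
  rw [hv, homZero₁ h h₃ hY v, comp_zero]

lemma summandL (h : IsTStructure L G) {X Y : C} (s : X ⟶ Y) (r : Y ⟶ X)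
    (hsr : s ≫ r = 𝟙 X) (hY : Y ∈ L) : X ∈ L := by
  rw [mem_aisle_iff h]
  intro W hW f
  have h1 : r ≫ f = 0 := homZero₁ h hY hW _
  calc f = (s ≫ r) ≫ f := by rw [hsr, Category.id_comp]
  _ = s ≫ (r ≫ f) := by rw [Category.assoc]
  _ = 0 := by rw [h1, comp_zero]

lemma extG (h : IsTStructure L G) {T : Triangle C} (hT : T ∈ distTriang C)
    (h₁ : T.obj₁ ∈ G) (h₃ : T.obj₃ ∈ G) : T.obj₂ ∈ G := by
  rw [mem_coaisle_iff h]
  intro W hW f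
  obtain ⟨a, b, c, hT'⟩ := shiftDistEx T hT (-1)
  obtain ⟨v, hv⟩ := Triangle.coyoneda_exact₂ _ hT' f (h.hom_vanish _ _ hW h₃ _)
  rw [hv, h.hom_vanish _ _ hW h₁ v]; exact zero_comp

lemma summandG (h : IsTStructure L G) {X Y : C} (s : X ⟶ Y) (r : Y ⟶ X)
    (hsr : s ≫ r = 𝟙 X) (hY : Y ∈ G) : X ∈ G := by
  rw [mem_coaisle_iff h]
  intro W hW f
  have h1 : f ≫ s⟦(-1 : ℤ)⟧' = 0 := h.hom_vanish _ _ hW hY _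
  calc f = f ≫ (𝟙 X)⟦(-1 : ℤ)⟧' := by simp
  _ = f ≫ (s ≫ r)⟦(-1 : ℤ)⟧' := by rw [hsr]
  _ = (f ≫ s⟦(-1 : ℤ)⟧') ≫ r⟦(-1 : ℤ)⟧' := by rw [Functor.map_comp, Category.assoc]
  _ = 0 := by rw [h1, zero_comp]

lemma closedL (h : IsTStructure L G) : IsClosedShiftExtSummands L 1 where
  iso_closed := h.aisle_iso_closed
  shift := h.shift_aisle
  ext := fun _ _ _ f g k hT hX hZ => extL h (T := Triangle.mk f g k) hT hX hZ
  summand := fun _ _ s r hsr hY => summandL h s r hsr hY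

lemma closedG (h : IsTStructure L G) : IsClosedShiftExtSummands G (-1) where
  iso_closed := h.coaisle_iso_closed
  shift := h.shift_coaisle
  ext := fun _ _ _ f g k hT hX hZ => extG h (T := Triangle.mk f g k) hT hX hZ
  summand := fun _ _ s r hsr hY => summandG h s r hsr hY

end Stmt6Aux

namespace Stmt6Aux

set_option linter.unusedSectionVars false

variable {C : Type u} [Category.{v} C] [HasZeroObject C] [Preadditive C] [HasShift C ℤ]
  [∀ n : ℤ, (shiftFunctor C n).Additive] [Pretriangulated C]

open Stmt6

variable {L G : Set C}

lemma shift_up {S : Set C} (hiso : ∀ ⦃X Y : C⦄, (X ≅ Y) → X ∈ S → Y ∈ S)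
    (hsh : ∀ X ∈ S, (X⟦(1 : ℤ)⟧) ∈ S) (n : ℕ) (Z : C) (hZ : Z ∈ S) : Z⟦(n : ℤ)⟧ ∈ S := by
  induction n with
  | zero => exact mem_shift_congr hiso Z 0 _ (by simp) ((mem_shift_zero_iff hiso Z).2 hZ)
  | succ n ih =>
    have h1 : Z⟦(n : ℤ)⟧⟦(1 : ℤ)⟧ ∈ S := hsh _ ih
    rw [mem_shift_shift_iff hiso Z _ _ ((n : ℤ) + 1) rfl] at h1
    exact mem_shift_congr hiso Z _ _ (by push_cast; ring) h1

lemma shift_down {S : Set C} (hiso : ∀ ⦃X Y : C⦄, (X ≅ Y) → X ∈ S → Y ∈ S)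
    (hsh : ∀ X ∈ S, (X⟦(-1 : ℤ)⟧) ∈ S) (n : ℕ) (Z : C) (hZ : Z ∈ S) : Z⟦-(n : ℤ)⟧ ∈ S := by
  induction n with
  | zero => exact mem_shift_congr hiso Z 0 _ (by simp) ((mem_shift_zero_iff hiso Z).2 hZ)
  | succ n ih =>
    have h1 : Z⟦-(n : ℤ)⟧⟦(-1 : ℤ)⟧ ∈ S := hsh _ ih
    rw [mem_shift_shift_iff hiso Z _ _ (-(n : ℤ) - 1) (by ring)] at h1
    exact mem_shift_congr hiso Z _ _ (by push_cast; ring) h1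

lemma aisle_min (h : IsTStructure L G) (hb : IsBoundedTStructure L G)
    (S : Set C) (hS : IsClosedShiftExtSummands S 1) (hHS : L ∩ G ⊆ S) : L ⊆ S := by
  have main : ∀ (d : ℕ) (X : C), X ∈ L → X⟦-(d : ℤ)⟧ ∈ G → X ∈ S := by
    intro d
    induction d with
    | zero =>
      intro X hXL hXG
      exact hHS ⟨hXL, (mem_shift_zero_iff h.coaisle_iso_closed X).1
        (mem_shift_congr h.coaisle_iso_closed X _ 0 (by simp) hXG)⟩
    | succ d ih =>
      intro X hXL hXG
      set n : ℤ := (d : ℤ) + 1 with hn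
      have hXG' : X⟦-n⟧ ∈ G :=
        mem_shift_congr h.coaisle_iso_closed X _ _ (by push_cast [hn]; ring) hXG
      obtain ⟨A, B, a, b, c, hA, hB, hT⟩ := h.exists_triangle (X⟦-n⟧)
      -- B ∈ G
      have hBG : B ∈ G := by
        have := h.shift_coaisle _ hB
        rw [mem_shift_shift_iff h.coaisle_iso_closed B 1 (-1) 0 (by ring)] at this
        exact (mem_shift_zero_iff h.coaisle_iso_closed B).1 this
      -- A ∈ G via extension closure on the inverse rotation
      have hAG : A ∈ G :=
        extG h (inv_rot_of_distTriang _ hT) (h.shift_coaisle _ hBG) hXG'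
      have hAS : A ∈ S := hHS ⟨hA, hAG⟩
      -- shift the triangle by n
      obtain ⟨a', b', c', hT'⟩ := shiftDistEx (Triangle.mk a b c) hT n
      have eX : X⟦-n⟧⟦n⟧ ≅ X :=
        ((shiftFunctorCompIsoId C (-n) n (by ring)).app X)
      have hXL' : X⟦-n⟧⟦n⟧ ∈ L := h.aisle_iso_closed eX.symm hXL
      have hAnL : A⟦n⟧ ∈ L := L_mono h (show (0 : ℤ) ≤ n by omega)
        ((mem_shift_zero_iff h.aisle_iso_closed A).2 hA)
      have hBnL : B⟦n⟧ ∈ L :=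
        extL h (rot_of_distTriang _ hT') hXL' (h.shift_aisle _ hAnL)
      have hBnG : B⟦n⟧⟦-(d : ℤ)⟧ ∈ G := by
        rw [mem_shift_shift_iff h.coaisle_iso_closed B n (-(d : ℤ)) 1 (by omega)]
        exact hB
      have hBnS : B⟦n⟧ ∈ S := ih _ hBnL hBnG
      have hAnS : A⟦n⟧ ∈ S := by
        have := shift_up hS.iso_closed hS.shift (d + 1) A hAS
        exact mem_shift_congr hS.iso_closed A _ _ (by push_cast; ring) this
      have hX2 : X⟦-n⟧⟦n⟧ ∈ S := hS.ext _ _ _ a' b' c' hT' hAnS hBnS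
      exact hS.iso_closed eX hX2
  intro X hX
  obtain ⟨m, hm⟩ := hb.2 X
  refine main (max 0 (-m)).toNat X hX (G_anti h ?_ hm)
  have := Int.toNat_of_nonneg (le_max_left 0 (-m))
  omega

lemma coaisle_min (h : IsTStructure L G) (hb : IsBoundedTStructure L G)
    (S : Set C) (hS : IsClosedShiftExtSummands S (-1)) (hHS : L ∩ G ⊆ S) : G ⊆ S := by
  have main : ∀ (d : ℕ) (X : C), X ∈ G → X⟦(d : ℤ)⟧ ∈ L → X ∈ S := by
    intro d
    induction d with
    | zero =>
      intro X hXG hXL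
      exact hHS ⟨(mem_shift_zero_iff h.aisle_iso_closed X).1
        (mem_shift_congr h.aisle_iso_closed X _ 0 (by simp) hXL), hXG⟩
    | succ d ih =>
      intro X hXG hXL
      set n : ℤ := (d : ℤ) with hn
      have hXL' : X⟦n + 1⟧ ∈ L :=
        mem_shift_congr h.aisle_iso_closed X _ _ (by push_cast [hn]; ring) hXL
      obtain ⟨A, B, a, b, c, hA, hB, hT⟩ := h.exists_triangle (X⟦n⟧)
      have hBG : B ∈ G := by
        have := h.shift_coaisle _ hB
        rw [mem_shift_shift_iff h.coaisle_iso_closed B 1 (-1) 0 (by ring)] at this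
        exact (mem_shift_zero_iff h.coaisle_iso_closed B).1 this
      -- B⟦1⟧ ∈ L via extension closure on rotation of triangle shifted by 1
      obtain ⟨p, q, r, hT1⟩ := shiftDistEx (Triangle.mk a b c) hT 1
      have hXn1L : X⟦n⟧⟦(1 : ℤ)⟧ ∈ L := by
        rw [mem_shift_shift_iff h.aisle_iso_closed X n 1 (n + 1) rfl]
        exact hXL'
      have hB1L : B⟦(1 : ℤ)⟧ ∈ L :=
        extL h (rot_of_distTriang _ hT1) hXn1L (h.shift_aisle _ (h.shift_aisle _ hA))
      have hB1S : B⟦(1 : ℤ)⟧ ∈ S := hHS ⟨hB1L, hB⟩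
      -- shift the triangle by -n
      obtain ⟨a', b', c', hT'⟩ := shiftDistEx (Triangle.mk a b c) hT (-n)
      have eX : X⟦n⟧⟦-n⟧ ≅ X := ((shiftFunctorCompIsoId C n (-n) (by ring)).app X)
      have hXG' : X⟦n⟧⟦-n⟧ ∈ G := h.coaisle_iso_closed eX.symm hXG
      -- A⟦-n⟧ ∈ G via extension closure on inverse rotation of shifted triangle
      have hBnG : B⟦-n⟧ ∈ G := G_anti h (show -n ≤ (0 : ℤ) by omega)
        ((mem_shift_zero_iff h.coaisle_iso_closed B).2 hBG)
      have hAnG : A⟦-n⟧ ∈ G :=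
        extG h (inv_rot_of_distTriang _ hT') (h.shift_coaisle _ hBnG) hXG'
      have hAnL : A⟦-n⟧⟦(d : ℤ)⟧ ∈ L := by
        rw [mem_shift_shift_iff h.aisle_iso_closed A (-n) (d : ℤ) 0 (by omega)]
        exact (mem_shift_zero_iff h.aisle_iso_closed A).2 hA
      have hAnS : A⟦-n⟧ ∈ S := ih _ hAnG hAnL
      have hBnS : B⟦-n⟧ ∈ S := by
        have := shift_down hS.iso_closed hS.shift (d + 1) (B⟦(1 : ℤ)⟧) hB1S
        have h2 := mem_shift_congr hS.iso_closed (B⟦(1 : ℤ)⟧) _ (-n - 1) (by push_cast; ring) this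
        rw [mem_shift_shift_iff hS.iso_closed B 1 (-n - 1) (-n) (by ring)] at h2
        exact h2
      have hX2 : X⟦n⟧⟦-n⟧ ∈ S := hS.ext _ _ _ a' b' c' hT' hAnS hBnS
      exact hS.iso_closed eX hX2
  intro X hX
  obtain ⟨m, hm⟩ := hb.1 X
  refine main (max 0 m).toNat X hX (L_mono h ?_ hm)
  have := Int.toNat_of_nonneg (le_max_left 0 m)
  omega

end Stmt6Aux

theorem stmt6 {C : Type u} [Category.{v} C] [HasZeroObject C] [Preadditive C] [HasShift C ℤ]
    [∀ n : ℤ, (shiftFunctor C n).Additive] [Pretriangulated C]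
    (L G L' G' : Set C) (h : IsTStructure L G) (hb : IsBoundedTStructure L G)
    (h' : IsTStructure L' G') (hb' : IsBoundedTStructure L' G') :
    (L ∩ G = L' ∩ G' → L = L' ∧ G = G') ∧
    (IsClosedShiftExtSummands L 1 ∧ L ∩ G ⊆ L ∧
      ∀ S : Set C, IsClosedShiftExtSummands S 1 → L ∩ G ⊆ S → L ⊆ S) ∧
    (IsClosedShiftExtSummands G (-1) ∧ L ∩ G ⊆ G ∧
      ∀ S : Set C, IsClosedShiftExtSummands S (-1) → L ∩ G ⊆ S → G ⊆ S) := by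
  refine ⟨?_, ?_, ?_⟩
  · intro hH
    constructor
    · apply Set.Subset.antisymm
      · exact Stmt6Aux.aisle_min h hb L' (Stmt6Aux.closedL h')
          (by rw [hH]; exact Set.inter_subset_left)
      · exact Stmt6Aux.aisle_min h' hb' L (Stmt6Aux.closedL h)
          (by rw [← hH]; exact Set.inter_subset_left)
    · apply Set.Subset.antisymm
      · exact Stmt6Aux.coaisle_min h hb G' (Stmt6Aux.closedG h')
          (by rw [hH]; exact Set.inter_subset_right)
      · exact Stmt6Aux.coaisle_min h' hb' G (Stmt6Aux.closedG h)
          (by rw [← hH]; exact Set.inter_subset_right)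
  · exact ⟨Stmt6Aux.closedL h, Set.inter_subset_left,
      fun S hS hHS => Stmt6Aux.aisle_min h hb S hS hHS⟩
  · exact ⟨Stmt6Aux.closedG h, Set.inter_subset_right,
      fun S hS hHS => Stmt6Aux.coaisle_min h hb S hS hHS⟩
end

section
/- Let (C^{≤0}, C^{≥0}) and (C'^{≤0}, C'^{≥0}) be two bounded t-structures on a triangulated category C. Then (C'^{≤0}, C'^{≥0}) is intermediate with respect to (C^{≤0}, C^{≥0}), i.e. ΣC^{≤0} ⊆ C'^{≤0} ⊆ C^{≤0}, if and only if the heart C'^{≤0} ∩ C'^{≥0} is contained in C^{≤0} ∩ ΣC^{≥0}. -/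
/-!
STATEMENT 7.
For two bounded t-structures `(C^{≤0}, C^{≥0})` and `(C'^{≤0}, C'^{≥0})` on `C`, the
second is intermediate with respect to the first (`ΣC^{≤0} ⊆ C'^{≤0} ⊆ C^{≤0}`) if and
only if its heart is contained in `C^{≤0} ∩ ΣC^{≥0}`.
(Here `X ∈ ΣS` iff `Σ⁻¹X ∈ S`, `S` being strict.)
-/

open CategoryTheory Limits Pretriangulated

namespace Stmt7

variable {C : Type u} [Category.{v} C] [HasZeroObject C] [Preadditive C] [HasShift C ℤ]
  [∀ n : ℤ, (shiftFunctor C n).Additive] [Pretriangulated C]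

/-- A t-structure on `C` given by its aisle `L` and co-aisle `G`. -/
structure IsTStructure (L G : Set C) : Prop where
  aisle_iso_closed : ∀ ⦃X Y : C⦄, (X ≅ Y) → X ∈ L → Y ∈ L
  coaisle_iso_closed : ∀ ⦃X Y : C⦄, (X ≅ Y) → X ∈ G → Y ∈ G
  shift_aisle : ∀ X ∈ L, (X⟦(1 : ℤ)⟧) ∈ L
  shift_coaisle : ∀ X ∈ G, (X⟦(-1 : ℤ)⟧) ∈ G
  hom_vanish : ∀ (X Y : C), X ∈ L → Y ∈ G → ∀ f : X ⟶ (Y⟦(-1 : ℤ)⟧), f = 0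
  exists_triangle : ∀ X : C, ∃ (M' M'' : C) (f : M' ⟶ X) (g : X ⟶ M'')
    (h : M'' ⟶ M'⟦(1 : ℤ)⟧), M' ∈ L ∧ (M''⟦(1 : ℤ)⟧) ∈ G ∧
      Triangle.mk f g h ∈ distTriang C

/-- Boundedness of a t-structure `(L, G)`. -/
def IsBoundedTStructure (L G : Set C) : Prop :=
  (∀ X : C, ∃ n : ℤ, (X⟦n⟧) ∈ L) ∧ (∀ X : C, ∃ n : ℤ, (X⟦n⟧) ∈ G)

/-- The shift `Σ S` of a strict full subcategory `S`. -/
def shiftSet (S : Set C) : Set C := {X : C | (X⟦(-1 : ℤ)⟧) ∈ S}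

section Helpers

variable {S : Set C}

lemma mem_shift_zero (hS : ∀ ⦃X Y : C⦄, (X ≅ Y) → X ∈ S → Y ∈ S) (X : C) :
    X⟦(0 : ℤ)⟧ ∈ S ↔ X ∈ S :=
  ⟨fun hX => hS ((shiftFunctorZero C ℤ).app X) hX,
   fun hX => hS ((shiftFunctorZero C ℤ).app X).symm hX⟩

lemma mem_shift_shift (hS : ∀ ⦃X Y : C⦄, (X ≅ Y) → X ∈ S → Y ∈ S) (X : C) (a b c : ℤ)
    (habc : a + b = c) : X⟦a⟧⟦b⟧ ∈ S ↔ X⟦c⟧ ∈ S :=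
  ⟨fun hX => hS ((shiftFunctorAdd' C a b c habc).app X).symm hX,
   fun hX => hS ((shiftFunctorAdd' C a b c habc).app X) hX⟩

end Helpers

namespace IsTStructure

variable {L G : Set C} (h : IsTStructure L G)
include h

lemma mem_L_shift {X : C} {a b : ℤ} (ha : X⟦a⟧ ∈ L) (hab : a ≤ b) : X⟦b⟧ ∈ L := by
  obtain ⟨n, rfl⟩ : ∃ n : ℕ, b = a + n := ⟨(b - a).toNat, by omega⟩
  clear hab
  induction n with
  | zero => simpa using ha
  | succ n ih =>
    have h1 := h.shift_aisle _ ih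
    exact h.aisle_iso_closed
      ((shiftFunctorAdd' C (a + n) 1 (a + (n + 1 : ℕ)) (by push_cast; ring)).app X).symm h1

lemma mem_G_shift {X : C} {a b : ℤ} (ha : X⟦a⟧ ∈ G) (hab : b ≤ a) : X⟦b⟧ ∈ G := by
  obtain ⟨n, rfl⟩ : ∃ n : ℕ, b = a - n := ⟨(a - b).toNat, by omega⟩
  clear hab
  induction n with
  | zero => simpa using ha
  | succ n ih =>
    have h1 := h.shift_coaisle _ ih
    exact h.coaisle_iso_closed
      ((shiftFunctorAdd' C (a - n) (-1) (a - (n + 1 : ℕ)) (by push_cast; ring)).app X).symm h1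

lemma vanish {X Y : C} {a b : ℤ} (ha : X⟦a⟧ ∈ L) (hb : Y⟦b⟧ ∈ G) (hab : a < b)
    (f : X ⟶ Y) : f = 0 := by
  have hY : Y⟦a + 1⟧ ∈ G := h.mem_G_shift hb (by omega)
  have e : Y⟦a⟧ ≅ (Y⟦a + 1⟧)⟦(-1 : ℤ)⟧ := (shiftFunctorAdd' C (a + 1) (-1) a (by ring)).app Y
  have h0 := h.hom_vanish _ _ ha hY ((shiftFunctor C a).map f ≫ e.hom)
  have h1 : (shiftFunctor C a).map f = 0 := by
    have : (shiftFunctor C a).map f = ((shiftFunctor C a).map f ≫ e.hom) ≫ e.inv := by simp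
    rw [this, h0, zero_comp]
  apply (shiftFunctor C a).map_injective
  rw [h1, Functor.map_zero]

lemma mem_L_of_orth {X : C} (hX : ∀ Y : C, Y⟦(1 : ℤ)⟧ ∈ G → ∀ f : X ⟶ Y, f = 0) :
    X ∈ L := by
  obtain ⟨M', M'', f, g, w, hM', hM'', hdt⟩ := h.exists_triangle X
  have hg : g = 0 := hX M'' hM'' g
  obtain ⟨ψ, hψ⟩ := Triangle.yoneda_exact₃ _ hdt (𝟙 M'') (by subst hg; exact zero_comp)
  have hψ0 : ψ = 0 :=
    h.vanish ((mem_shift_zero h.aisle_iso_closed _).2 (h.shift_aisle _ hM')) hM''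
      (by omega) ψ
  have hzero : IsZero M'' := by
    rw [IsZero.iff_id_eq_zero, hψ, hψ0, comp_zero]; rfl
  have : IsIso ((Triangle.mk f g w).mor₁) :=
    (Triangle.isZero₃_iff_isIso₁ _ hdt).1 hzero
  exact h.aisle_iso_closed (@asIso _ _ _ _ ((Triangle.mk f g w).mor₁) this) hM'

lemma shift_mem_G_of_orth {X : C} (hX : ∀ Z : C, Z ∈ L → ∀ f : Z ⟶ X, f = 0) :
    X⟦(1 : ℤ)⟧ ∈ G := by
  obtain ⟨M', M'', f, g, w, hM', hM'', hdt⟩ := h.exists_triangle X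
  have hf : f = 0 := hX M' hM' f
  obtain ⟨ψ, hψ⟩ := Triangle.coyoneda_exact₂ _ (inv_rot_of_distTriang _ hdt) (𝟙 M')
    (by subst hf; exact comp_zero)
  have hψ0 : ψ = 0 :=
    h.vanish ((mem_shift_zero h.aisle_iso_closed _).2 hM')
      ((mem_shift_shift h.coaisle_iso_closed M'' (-1) 2 1 (by ring)).2 hM'') (by omega) ψ
  have hzero : IsZero M' := by
    rw [IsZero.iff_id_eq_zero, hψ, hψ0, zero_comp]; rfl
  have : IsIso ((Triangle.mk f g w).mor₂) :=
    (Triangle.isZero₁_iff_isIso₂ _ hdt).1 hzero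
  exact h.coaisle_iso_closed
    ((shiftFunctor C (1 : ℤ)).mapIso (asIso ((Triangle.mk f g w).mor₂))).symm hM''

lemma ext_L {T : Triangle C} (hT : T ∈ distTriang C) (h1 : T.obj₁ ∈ L)
    (h3 : T.obj₃ ∈ L) : T.obj₂ ∈ L := by
  refine h.mem_L_of_orth (fun Y hY f => ?_)
  have h1f : T.mor₁ ≫ f = 0 :=
    h.vanish ((mem_shift_zero h.aisle_iso_closed _).2 h1) hY (by omega) _
  obtain ⟨g, hg⟩ := Triangle.yoneda_exact₂ _ hT f h1f
  rw [hg, h.vanish ((mem_shift_zero h.aisle_iso_closed _).2 h3) hY (by omega) g, comp_zero]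

lemma ext_G {T : Triangle C} (hT : T ∈ distTriang C) (h1 : T.obj₁ ∈ G)
    (h3 : T.obj₃ ∈ G) : T.obj₂ ∈ G := by
  have key : (T.obj₂⟦(-1 : ℤ)⟧)⟦(1 : ℤ)⟧ ∈ G := by
    refine h.shift_mem_G_of_orth (fun Z hZ f => ?_)
    have hdt1 := Triangle.shift_distinguished T hT (-1)
    have h3' : (T.obj₃⟦(-1 : ℤ)⟧)⟦(1 : ℤ)⟧ ∈ G :=
      (mem_shift_shift h.coaisle_iso_closed _ (-1) 1 0 (by ring)).2
        ((mem_shift_zero h.coaisle_iso_closed _).2 h3)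
    have h1' : (T.obj₁⟦(-1 : ℤ)⟧)⟦(1 : ℤ)⟧ ∈ G :=
      (mem_shift_shift h.coaisle_iso_closed _ (-1) 1 0 (by ring)).2
        ((mem_shift_zero h.coaisle_iso_closed _).2 h1)
    have hZ0 : Z⟦(0 : ℤ)⟧ ∈ L := (mem_shift_zero h.aisle_iso_closed _).2 hZ
    have hf2 : f ≫ ((CategoryTheory.shiftFunctor (Triangle C) (-1 : ℤ)).obj T).mor₂ = 0 :=
      h.vanish hZ0 h3' (by omega) _
    obtain ⟨g, hg⟩ := Triangle.coyoneda_exact₂ _ hdt1 f hf2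
    rw [hg, h.vanish hZ0 h1' (by omega) g]; exact zero_comp
  exact (mem_shift_zero h.coaisle_iso_closed _).1
    ((mem_shift_shift h.coaisle_iso_closed _ (-1) 1 0 (by ring)).1 key)

end IsTStructure

section Induction

variable {L G L' G' : Set C} (h : IsTStructure L G) (h' : IsTStructure L' G')
  (hh : L' ∩ G' ⊆ L ∩ shiftSet G)
include h h' hh

lemma indL : ∀ n : ℕ, ∀ X : C, X ∈ L' → X⟦-(n : ℤ)⟧ ∈ G' → X ∈ L := by
  intro n
  induction n with
  | zero =>
    intro X hX1 hX2
    exact (hh ⟨hX1, (mem_shift_zero h'.coaisle_iso_closed X).1 (by simpa using hX2)⟩).1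
  | succ n ih =>
    intro X hX1 hX2
    obtain ⟨M', M'', f, g, w, hM', hM'', hdt⟩ := h'.exists_triangle (X⟦(-1 : ℤ)⟧)
    set T := Triangle.mk f g w with hT
    have hdt1 := Triangle.shift_distinguished T hdt 1
    -- B := M''⟦1⟧ is in the heart of (L', G')
    have hB : (M''⟦(1 : ℤ)⟧) ∈ L' := by
      refine h'.ext_L (rot_of_distTriang _ hdt1) ?_ ?_
      · exact (mem_shift_shift h'.aisle_iso_closed X (-1) 1 0 (by ring)).2
          ((mem_shift_zero h'.aisle_iso_closed X).2 hX1)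
      · exact h'.shift_aisle _ (h'.shift_aisle _ hM')
    have hBheart := hh ⟨hB, hM''⟩
    -- M' has coconnectivity bound n
    have hM'G : M'⟦-(n : ℤ)⟧ ∈ G' := by
      have hdt2 := Triangle.shift_distinguished _
        (rot_of_distTriang _ (rot_of_distTriang _ hdt)) (-(n : ℤ) - 1)
      have := h'.ext_G hdt2 (h'.mem_G_shift hM'' (show -(n : ℤ) - 1 ≤ 1 by omega)) ?_
      · exact (mem_shift_shift h'.coaisle_iso_closed M' 1 (-(n : ℤ) - 1) (-(n : ℤ))
          (by ring)).1 this
      · show (X⟦(-1 : ℤ)⟧⟦(1 : ℤ)⟧)⟦-(n : ℤ) - 1⟧ ∈ G'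
        rw [mem_shift_shift h'.coaisle_iso_closed _ 1 (-(n : ℤ) - 1) (-(n : ℤ)) (by ring),
          mem_shift_shift h'.coaisle_iso_closed X (-1) (-(n : ℤ)) (-(n : ℤ) - 1) (by ring)]
        have : -((n : ℤ) + 1) = -(n : ℤ) - 1 := by ring
        rw [← this]
        exact_mod_cast hX2
    have hM'L : M' ∈ L := ih M' hM' hM'G
    have hXL : (X⟦(-1 : ℤ)⟧)⟦(1 : ℤ)⟧ ∈ L :=
      h.ext_L hdt1 (h.shift_aisle _ hM'L) hBheart.1
    exact (mem_shift_zero h.aisle_iso_closed X).1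
      ((mem_shift_shift h.aisle_iso_closed X (-1) 1 0 (by ring)).1 hXL)

lemma indG : ∀ n : ℕ, ∀ Y : C, Y ∈ G' → Y⟦(n : ℤ)⟧ ∈ L' → Y⟦(-1 : ℤ)⟧ ∈ G := by
  intro n
  induction n with
  | zero =>
    intro Y hY1 hY2
    exact (hh ⟨(mem_shift_zero h'.aisle_iso_closed Y).1 (by simpa using hY2), hY1⟩).2
  | succ n ih =>
    intro Y hY1 hY2
    obtain ⟨M', M'', f, g, w, hM', hM'', hdt⟩ := h'.exists_triangle Y
    set T := Triangle.mk f g w with hT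
    -- M' is in the heart of (L', G')
    have hM'G' : M' ∈ G' :=
      h'.ext_G (inv_rot_of_distTriang _ hdt) (h'.mem_G_shift hM'' (by omega)) hY1
    have hM'heart := hh ⟨hM', hM'G'⟩
    -- M'' has connectivity bound allowing the inductive step
    have hM''L' : M''⟦(n : ℤ) + 1⟧ ∈ L' := by
      have hdt2 := Triangle.shift_distinguished _ (rot_of_distTriang _ hdt) ((n : ℤ) + 1)
      refine h'.ext_L hdt2 ?_ ?_
      · show Y⟦(n : ℤ) + 1⟧ ∈ L'
        have : ((n : ℕ) + 1 : ℤ) = (n : ℤ) + 1 := by push_cast; ring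
        rw [← this]
        exact_mod_cast hY2
      · show (M'⟦(1 : ℤ)⟧)⟦(n : ℤ) + 1⟧ ∈ L'
        rw [mem_shift_shift h'.aisle_iso_closed M' 1 ((n : ℤ) + 1) ((n : ℤ) + 2) (by ring)]
        exact h'.mem_L_shift ((mem_shift_zero h'.aisle_iso_closed M').2 hM') (by omega)
    have hih := ih (M''⟦(1 : ℤ)⟧) hM''
      ((mem_shift_shift h'.aisle_iso_closed M'' 1 (n : ℤ) ((n : ℤ) + 1) (by ring)).2 hM''L')
    have hM''G : M''⟦(-1 : ℤ)⟧ ∈ G :=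
      h.mem_G_shift ((mem_shift_shift h.coaisle_iso_closed M'' 1 (-1) 0 (by ring)).1 hih)
        (by omega)
    have hdt3 := Triangle.shift_distinguished T hdt (-1)
    exact h.ext_G hdt3 hM'heart.2 hM''G

end Induction

end Stmt7

open Stmt7

theorem stmt7 {C : Type u} [Category.{v} C] [HasZeroObject C] [Preadditive C] [HasShift C ℤ]
    [∀ n : ℤ, (shiftFunctor C n).Additive] [Pretriangulated C]
    (L G L' G' : Set C) (h : IsTStructure L G) (hb : IsBoundedTStructure L G)
    (h' : IsTStructure L' G') (hb' : IsBoundedTStructure L' G') :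
    (shiftSet L ⊆ L' ∧ L' ⊆ L) ↔ (L' ∩ G' ⊆ L ∩ shiftSet G) := by
  constructor
  · rintro ⟨h1, h2⟩ X ⟨hXL', hXG'⟩
    refine ⟨h2 hXL', ?_⟩
    have key : (X⟦(-2 : ℤ)⟧)⟦(1 : ℤ)⟧ ∈ G := by
      refine h.shift_mem_G_of_orth (fun Z hZ f => ?_)
      refine h'.vanish (a := 1) (b := 2) ?_ ?_ (by omega) f
      · exact h1 (show Z⟦(1 : ℤ)⟧ ∈ shiftSet L from
          (mem_shift_shift h.aisle_iso_closed Z 1 (-1) 0 (by ring)).2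
            ((mem_shift_zero h.aisle_iso_closed Z).2 hZ))
      · exact (mem_shift_shift h'.coaisle_iso_closed X (-2) 2 0 (by ring)).2
          ((mem_shift_zero h'.coaisle_iso_closed X).2 hXG')
    exact (mem_shift_shift h.coaisle_iso_closed X (-2) 1 (-1) (by ring)).1 key
  · intro hh
    constructor
    · intro X hX
      have hX' : X⟦(-1 : ℤ)⟧ ∈ L := hX
      refine h'.mem_L_of_orth (fun Y hY f => ?_)
      obtain ⟨m, hm⟩ := hb'.1 (Y⟦(1 : ℤ)⟧)
      have hn : (Y⟦(1 : ℤ)⟧)⟦(((max m 0).toNat : ℕ) : ℤ)⟧ ∈ L' :=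
        h'.mem_L_shift hm (by omega)
      have hind := indG h h' hh (max m 0).toNat (Y⟦(1 : ℤ)⟧) hY hn
      have hYG : Y⟦(0 : ℤ)⟧ ∈ G :=
        (mem_shift_shift h.coaisle_iso_closed Y 1 (-1) 0 (by ring)).1 hind
      exact h.vanish (a := -1) (b := 0) hX' hYG (by omega) f
    · intro X hX
      obtain ⟨m, hm⟩ := hb'.2 X
      have hn : X⟦-(((-m).toNat : ℕ) : ℤ)⟧ ∈ G' := h'.mem_G_shift hm (by omega)
      exact indL h h' hh (-m).toNat X hX hn
end

section
/- Let (C^{≤0}, C^{≥0}) be a bounded t-structure on a triangulated category C with heart A. Then the Happel–Reiten–Smalø tilt induces a bijection from the set of torsion pairs of A to the set of t-structures on C that are intermediate with respect to (C^{≤0}, C^{≥0}); its inverse takes an intermediate t-structure (C'^{≤0}, C'^{≥0}) to the torsion pair (C'^{≤0} ∩ A, (Σ⁻¹C'^{≥0}) ∩ A) of A. -/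
/-!
STATEMENT 9 (Beligiannis–Reiten, Woolf).
For a bounded t-structure `(C^{≤0}, C^{≥0})` on `C` with heart `A`, the
Happel–Reiten–Smalø tilt is a bijection from torsion pairs of `A` onto the t-structures
intermediate with respect to `(C^{≤0}, C^{≥0})`, with inverse
`(C'^{≤0}, C'^{≥0}) ↦ (C'^{≤0} ∩ A, (Σ⁻¹C'^{≥0}) ∩ A)`.
-/

open CategoryTheory Limits Pretriangulated

namespace Stmt9

variable {C : Type u} [Category.{v} C] [HasZeroObject C] [Preadditive C] [HasShift C ℤ]
  [∀ n : ℤ, (shiftFunctor C n).Additive] [Pretriangulated C]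

/-- A t-structure on `C` given by its aisle `L` and co-aisle `G`. -/
structure IsTStructure (L G : Set C) : Prop where
  aisle_iso_closed : ∀ ⦃X Y : C⦄, (X ≅ Y) → X ∈ L → Y ∈ L
  coaisle_iso_closed : ∀ ⦃X Y : C⦄, (X ≅ Y) → X ∈ G → Y ∈ G
  shift_aisle : ∀ X ∈ L, (X⟦(1 : ℤ)⟧) ∈ L
  shift_coaisle : ∀ X ∈ G, (X⟦(-1 : ℤ)⟧) ∈ G
  hom_vanish : ∀ (X Y : C), X ∈ L → Y ∈ G → ∀ f : X ⟶ (Y⟦(-1 : ℤ)⟧), f = 0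
  exists_triangle : ∀ X : C, ∃ (M' M'' : C) (f : M' ⟶ X) (g : X ⟶ M'')
    (h : M'' ⟶ M'⟦(1 : ℤ)⟧), M' ∈ L ∧ (M''⟦(1 : ℤ)⟧) ∈ G ∧
      Triangle.mk f g h ∈ distTriang C

/-- Boundedness of a t-structure `(L, G)`. -/
def IsBoundedTStructure (L G : Set C) : Prop :=
  (∀ X : C, ∃ n : ℤ, (X⟦n⟧) ∈ L) ∧ (∀ X : C, ∃ n : ℤ, (X⟦n⟧) ∈ G)

/-- The shift `Σ S` of a strict full subcategory `S`. -/
def shiftSet (S : Set C) : Set C := {X : C | (X⟦(-1 : ℤ)⟧) ∈ S}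

/-- The inverse shift `Σ⁻¹ S` of a strict full subcategory `S`. -/
def unshiftSet (S : Set C) : Set C := {X : C | (X⟦(1 : ℤ)⟧) ∈ S}

/-- `(T, F)` is a torsion pair of the heart `H`. -/
structure IsTorsionPairIn (H T F : Set C) : Prop where
  torsion_sub : T ⊆ H
  free_sub : F ⊆ H
  torsion_iso_closed : ∀ ⦃X Y : C⦄, (X ≅ Y) → X ∈ T → Y ∈ T
  free_iso_closed : ∀ ⦃X Y : C⦄, (X ≅ Y) → X ∈ F → Y ∈ F
  hom_vanish : ∀ (X Y : C), X ∈ T → Y ∈ F → ∀ f : X ⟶ Y, f = 0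
  exists_ses : ∀ M ∈ H, ∃ (M' M'' : C) (f : M' ⟶ M) (g : M ⟶ M'')
    (h : M'' ⟶ M'⟦(1 : ℤ)⟧), M' ∈ T ∧ M'' ∈ F ∧ Triangle.mk f g h ∈ distTriang C

/-- The aisle of the Happel–Reiten–Smalø tilt. -/
def tiltAisle (L T : Set C) : Set C :=
  {X : C | ∃ (A B : C) (f : A ⟶ X) (g : X ⟶ B) (h : B ⟶ A⟦(1 : ℤ)⟧),
    Triangle.mk f g h ∈ (distTriang C) ∧ (A⟦(-1 : ℤ)⟧) ∈ L ∧ B ∈ T}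

/-- The co-aisle of the Happel–Reiten–Smalø tilt. -/
def tiltCoaisle (G F : Set C) : Set C :=
  {X : C | ∃ (A B : C) (f : A ⟶ X) (g : X ⟶ B) (h : B ⟶ A⟦(1 : ℤ)⟧),
    Triangle.mk f g h ∈ (distTriang C) ∧ (A⟦(-1 : ℤ)⟧) ∈ F ∧ B ∈ G}

/-- `(L', G')` is intermediate with respect to `(L, G)`:  `ΣL ⊆ L' ⊆ L`. -/
def Intermediate (L L' : Set C) : Prop :=
  shiftSet L ⊆ L' ∧ L' ⊆ L

end Stmt9


set_option linter.unusedSectionVars false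
set_option maxHeartbeats 1000000

namespace Stmt9Aux
open Stmt9 ZeroObject
universe v u
variable {C : Type u} [Category.{v} C] [HasZeroObject C] [Preadditive C] [HasShift C ℤ]
  [∀ n : ℤ, (shiftFunctor C n).Additive] [Pretriangulated C]



/-- shorthand: all maps `X ⟶ Y` vanish -/
def Zer (X Y : C) : Prop := ∀ f : X ⟶ Y, f = 0

lemma zer_of_iso_left {X X' Y : C} (e : X ≅ X') (hz : Zer X Y) : Zer X' Y := fun f => by
  have := hz (e.hom ≫ f)
  calc f = e.inv ≫ (e.hom ≫ f) := by simp
  _ = 0 := by rw [this, comp_zero]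

lemma zer_of_iso_right {X Y Y' : C} (e : Y ≅ Y') (hz : Zer X Y) : Zer X Y' := fun f => by
  have := hz (f ≫ e.inv)
  calc f = (f ≫ e.inv) ≫ e.hom := by simp
  _ = 0 := by rw [this, zero_comp]

lemma zer_shift {X Y : C} (n : ℤ) (hz : Zer X Y) : Zer (X⟦n⟧) (Y⟦n⟧) := fun f => by
  obtain ⟨g, rfl⟩ := (shiftFunctor C n).map_surjective f
  rw [hz g, Functor.map_zero]

lemma zer_unshift {X Y : C} (n : ℤ) (hz : Zer (X⟦n⟧) (Y⟦n⟧)) : Zer X Y := fun f => by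
  have := hz ((shiftFunctor C n).map f)
  exact (shiftFunctor C n).map_injective (by rw [this, Functor.map_zero])

lemma comp_map_zero {P Q W : C} (n : ℤ) (p : P ⟶ Q) (hC : ∀ w : Q ⟶ W, p ≫ w = 0)
    (v : Q⟦n⟧ ⟶ W⟦n⟧) : p⟦n⟧' ≫ v = 0 := by
  obtain ⟨w, rfl⟩ := (shiftFunctor C n).map_surjective v
  rw [← Functor.map_comp, hC, Functor.map_zero]

lemma zer_of_isZero_src {X Y : C} (hX : IsZero X) : Zer X Y := fun f => hX.eq_of_src f 0
lemma zer_of_isZero_tgt {X Y : C} (hY : IsZero Y) : Zer X Y := fun f => hY.eq_of_tgt f 0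

lemma isZero_shift {Z : C} (n : ℤ) (hZ : IsZero Z) : IsZero (Z⟦n⟧) := by
  rw [IsZero.iff_id_eq_zero] at hZ ⊢
  have : (shiftFunctor C n).map (𝟙 Z) = 0 := by rw [hZ, Functor.map_zero]
  simpa using this

/-- shift a distinguished triangle by 1 (triple rotation) -/
lemma shift_tri_one (T : Triangle C) (hT : T ∈ distTriang C) :
    ∃ (f : T.obj₁⟦(1:ℤ)⟧ ⟶ T.obj₂⟦(1:ℤ)⟧) (g : T.obj₂⟦(1:ℤ)⟧ ⟶ T.obj₃⟦(1:ℤ)⟧)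
      (hh : T.obj₃⟦(1:ℤ)⟧ ⟶ (T.obj₁⟦(1:ℤ)⟧)⟦(1:ℤ)⟧),
      Triangle.mk f g hh ∈ distTriang C :=
  ⟨_, _, _, rot_of_distTriang _ (rot_of_distTriang _ (rot_of_distTriang _ hT))⟩

/-- shift a distinguished triangle by -1 (triple inverse rotation) -/
lemma shift_tri_negone (T : Triangle C) (hT : T ∈ distTriang C) :
    ∃ (f : T.obj₁⟦(-1:ℤ)⟧ ⟶ T.obj₂⟦(-1:ℤ)⟧) (g : T.obj₂⟦(-1:ℤ)⟧ ⟶ T.obj₃⟦(-1:ℤ)⟧)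
      (hh : T.obj₃⟦(-1:ℤ)⟧ ⟶ (T.obj₁⟦(-1:ℤ)⟧)⟦(1:ℤ)⟧),
      Triangle.mk f g hh ∈ distTriang C :=
  ⟨_, _, _, inv_rot_of_distTriang _ (inv_rot_of_distTriang _ (inv_rot_of_distTriang _ hT))⟩

/-- replace the middle object of a distinguished triangle by an isomorphic one -/
lemma tri_iso₂ {A X B : C} {f : A ⟶ X} {g : X ⟶ B} {hh : B ⟶ A⟦(1:ℤ)⟧}
    (hT : Triangle.mk f g hh ∈ distTriang C) {Y : C} (e : X ≅ Y) :
    Triangle.mk (f ≫ e.hom) (e.inv ≫ g) hh ∈ distTriang C := by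
  refine isomorphic_distinguished _ hT _ ?_
  exact Triangle.isoMk _ _ (Iso.refl _) e.symm (Iso.refl _) (by show (f ≫ e.hom) ≫ e.inv = 𝟙 A ≫ f; simp) (by show (e.inv ≫ g) ≫ 𝟙 B = e.inv ≫ g; simp) (by show hh ≫ (𝟙 A)⟦(1:ℤ)⟧' = 𝟙 B ≫ hh; simp)

section
variable {L G : Set C} (h : IsTStructure L G)
include h

lemma hv {X Y : C} (hX : X ∈ L) (hY : Y ∈ G) : Zer X (Y⟦(-1:ℤ)⟧) :=
  h.hom_vanish X Y hX hY

/-- `A⟦-1⟧ ∈ L` means `A ∈ ΣL`;  `Hom(ΣL, G) = 0`. -/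
lemma zSG {A Y : C} (hA : A⟦(-1:ℤ)⟧ ∈ L) (hY : Y ∈ G) : Zer A Y :=
  zer_unshift (-1) (hv h hA hY)

lemma memL_of_negshift {A : C} (hA : A⟦(-1:ℤ)⟧ ∈ L) : A ∈ L :=
  h.aisle_iso_closed (shiftNegShift A (1:ℤ)) (h.shift_aisle _ hA)

lemma memL_shiftshiftneg {A : C} (hA : A ∈ L) : A⟦(1:ℤ)⟧⟦(-1:ℤ)⟧ ∈ L :=
  h.aisle_iso_closed (shiftShiftNeg A (1:ℤ)).symm hA

/-- `Hom(ΣL, Σ⁻¹G) = 0` in the form `Zer (X⟦1⟧) (Y⟦-1⟧)`. -/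
lemma hvT' {X Y : C} (hX : X ∈ L) (hY : Y ∈ G) : Zer (X⟦(1:ℤ)⟧) Y :=
  zSG h (memL_shiftshiftneg h hX) hY

lemma memG_of_shiftneg {Y : C} (hY : Y⟦(1:ℤ)⟧ ∈ G) : Y ∈ G :=
  h.coaisle_iso_closed (shiftShiftNeg Y (1:ℤ)) (h.shift_coaisle _ hY)

/-- if all maps from `L` to `Y⟦-1⟧` vanish then `Y ∈ G`. -/
lemma mem_G_of_zer {Y : C} (hZ : ∀ X ∈ L, Zer X (Y⟦(-1:ℤ)⟧)) : Y ∈ G := by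
  obtain ⟨M', M'', f, g, hh, hM', hM'', hdist⟩ := h.exists_triangle (Y⟦(-1:ℤ)⟧)
  have hf : f = 0 := hZ M' hM' f
  obtain ⟨s, hs⟩ := Triangle.coyoneda_exact₂ _
    (rot_of_distTriang _ (rot_of_distTriang _ hdist)) (𝟙 (M'⟦(1:ℤ)⟧))
    (by show 𝟙 (M'⟦(1:ℤ)⟧) ≫ (-(f⟦(1:ℤ)⟧')) = 0; rw [hf]; simp)
  have hs0 : s = 0 := by
    have := hv h (h.shift_aisle _ hM') hM'' (s ≫ (shiftShiftNeg M'' (1:ℤ)).inv)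
    exact ((Category.assoc _ _ _).trans ((congrArg (s ≫ ·) (Iso.inv_hom_id _)).trans (Category.comp_id s))).symm.trans ((congrArg (· ≫ (shiftShiftNeg M'' (1:ℤ)).hom) this).trans zero_comp)
  have hid : 𝟙 (M'⟦(1:ℤ)⟧) = 0 := by rw [hs, hs0, zero_comp]; rfl
  have hh0 : hh = 0 := by
    calc hh = hh ≫ 𝟙 (M'⟦(1:ℤ)⟧) := by simp
    _ = 0 := by rw [hid, comp_zero]
  have hz1 : IsZero ((Triangle.mk f g hh).obj₁) :=
    ((Triangle.mk f g hh).isZero₁_iff hdist).2 ⟨hf, hh0⟩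
  have : IsIso g := ((Triangle.mk f g hh).isZero₁_iff_isIso₂ hdist).1 hz1
  exact h.coaisle_iso_closed
    (((shiftFunctor C (1:ℤ)).mapIso (asIso g)).symm ≪≫ shiftNegShift Y (1:ℤ)) hM''

/-- if all maps from `X` to `Σ⁻¹G` vanish then `X ∈ L`. -/
lemma mem_L_of_zer {X : C} (hZ : ∀ Y ∈ G, Zer X (Y⟦(-1:ℤ)⟧)) : X ∈ L := by
  obtain ⟨M', M'', f, g, hh, hM', hM'', hdist⟩ := h.exists_triangle X
  have hg : g = 0 := by
    have := hZ _ hM'' (g ≫ (shiftShiftNeg M'' (1:ℤ)).inv)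
    calc g = (g ≫ (shiftShiftNeg M'' (1:ℤ)).inv) ≫ (shiftShiftNeg M'' (1:ℤ)).hom := by rw [Category.assoc, Iso.inv_hom_id, Category.comp_id]
    _ = 0 := by rw [this, zero_comp]
  obtain ⟨ψ, hψ⟩ := Triangle.yoneda_exact₃ _ hdist (𝟙 M'') (by show g ≫ 𝟙 M'' = 0; rw [hg]; simp)
  have hψ0 : ψ = 0 := hvT' h hM' (memG_of_shiftneg h hM'') ψ
  have hid : 𝟙 M'' = 0 := by rw [hψ, hψ0, comp_zero]; rfl
  have hh0 : hh = 0 := by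
    calc hh = 𝟙 M'' ≫ hh := by simp
    _ = 0 := by rw [hid, zero_comp]
  have hz3 : IsZero ((Triangle.mk f g hh).obj₃) :=
    ((Triangle.mk f g hh).isZero₃_iff hdist).2 ⟨hg, hh0⟩
  have : IsIso f := ((Triangle.mk f g hh).isZero₃_iff_isIso₁ hdist).1 hz3
  exact h.aisle_iso_closed (asIso f) hM'

lemma mem_L_of_isZero {X : C} (hX : IsZero X) : X ∈ L :=
  mem_L_of_zer h (fun _ _ => zer_of_isZero_src hX)

lemma mem_G_of_isZero {Y : C} (hY : IsZero Y) : Y ∈ G :=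
  mem_G_of_zer h (fun _ _ => zer_of_isZero_tgt (isZero_shift _ hY))

end

lemma zer_res_source {T : Triangle C} (hT : T ∈ distTriang C) {W : C}
    (h1 : Zer T.obj₁ W) (h3 : Zer T.obj₃ W) : Zer T.obj₂ W := fun f => by
  obtain ⟨g, hg⟩ := Triangle.yoneda_exact₂ _ hT f (h1 _)
  rw [hg, h3 g, comp_zero]

lemma zer_res_target {T : Triangle C} (hT : T ∈ distTriang C) {X : C}
    (h1 : Zer X T.obj₁) (h3 : Zer X T.obj₃) : Zer X T.obj₂ := fun f => by
  obtain ⟨g, hg⟩ := Triangle.coyoneda_exact₂ _ hT f (h3 _)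
  rw [hg, h1 g, zero_comp]

section
variable {L G : Set C} (h : IsTStructure L G)
include h

lemma extL {T : Triangle C} (hT : T ∈ distTriang C) (h1 : T.obj₁ ∈ L) (h3 : T.obj₃ ∈ L) :
    T.obj₂ ∈ L :=
  mem_L_of_zer h (fun _ hY => zer_res_source hT (hv h h1 hY) (hv h h3 hY))

lemma extG {T : Triangle C} (hT : T ∈ distTriang C) (h1 : T.obj₁ ∈ G) (h3 : T.obj₃ ∈ G) :
    T.obj₂ ∈ G := by
  refine mem_G_of_zer h (fun X hX => ?_)
  obtain ⟨f, g, hh, hd⟩ := shift_tri_negone T hT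
  exact zer_res_target hd (hv h hX h1) (hv h hX h3)

/-- the truncation triangle of `X` for the shifted t-structure `(ΣL, ΣG)`. -/
lemma decompose_shift (X : C) :
    ∃ (A B : C) (a : A ⟶ X) (g : X ⟶ B) (hh : B ⟶ A⟦(1:ℤ)⟧),
      Triangle.mk a g hh ∈ (distTriang C) ∧ A⟦(-1:ℤ)⟧ ∈ L ∧ B ∈ G := by
  obtain ⟨A₀, B₀, f, g, hh, hA₀, hB₀, hd⟩ := h.exists_triangle (X⟦(-1:ℤ)⟧)
  obtain ⟨f₁, g₁, hh₁, hd₁⟩ := shift_tri_one _ hd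
  have hd₂ := tri_iso₂ hd₁ (shiftNegShift X (1:ℤ))
  exact ⟨A₀⟦(1:ℤ)⟧, B₀⟦(1:ℤ)⟧, _, _, _, hd₂,
    h.aisle_iso_closed (shiftShiftNeg A₀ (1:ℤ)).symm hA₀, hB₀⟩

/-- decomposition of an object of `G`:  `H⁰ → W → τ≥1 W`. -/
lemma decompose_G {W : C} (hW : W ∈ G) :
    ∃ (H W' : C) (u : H ⟶ W) (v : W ⟶ W') (hh : W' ⟶ H⟦(1:ℤ)⟧),
      Triangle.mk u v hh ∈ (distTriang C) ∧ H ∈ L ∩ G ∧ W'⟦(1:ℤ)⟧ ∈ G := by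
  obtain ⟨H, W', u, v, hh, hH, hW', hd⟩ := h.exists_triangle W
  refine ⟨H, W', u, v, hh, hd, ⟨hH, ?_⟩, hW'⟩
  refine mem_G_of_zer h (fun X hX => ?_)
  obtain ⟨f₁, g₁, hh₁, hd₁⟩ := shift_tri_negone _ (inv_rot_of_distTriang _ hd)
  exact zer_res_target hd₁
    (hv h hX (h.shift_coaisle _ (memG_of_shiftneg h hW'))) (hv h hX hW)

/-- decomposition of an object of `L`:  `τ≤-1 W → W → H⁰ W`. -/
lemma decompose_L {W : C} (hW : W ∈ L) :
    ∃ (W₁ H : C) (f : W₁ ⟶ W) (g : W ⟶ H) (hh : H ⟶ W₁⟦(1:ℤ)⟧),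
      Triangle.mk f g hh ∈ (distTriang C) ∧ W₁⟦(-1:ℤ)⟧ ∈ L ∧ H ∈ L ∩ G := by
  obtain ⟨A, B, a, g, hh, hd, hA, hB⟩ := decompose_shift h W
  refine ⟨A, B, a, g, hh, hd, hA, ⟨?_, hB⟩⟩
  refine mem_L_of_zer h (fun Y hY φ => ?_)
  obtain ⟨ψ, hψ⟩ := Triangle.yoneda_exact₃ _ hd φ (hv h hW hY _)
  rw [hψ, hvT' h (memL_of_negshift h hA) (h.shift_coaisle _ hY) ψ]; exact comp_zero

section
variable {T F : Set C} (hTP : IsTorsionPairIn (L ∩ G) T F)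
include hTP

lemma mem_T_of_isZero {M : C} (hM : IsZero M) : M ∈ T := by
  obtain ⟨M₁, M₂, f, g, hh, hM₁, hM₂, hd⟩ := hTP.exists_ses 0
    ⟨mem_L_of_isZero h (isZero_zero C), mem_G_of_isZero h (isZero_zero C)⟩
  obtain ⟨χ, hχ⟩ := Triangle.coyoneda_exact₂ _ (inv_rot_of_distTriang _ hd) (𝟙 M₁)
    ((isZero_zero C).eq_of_tgt _ 0)
  have : IsZero M₁ := by
    rw [IsZero.iff_id_eq_zero, hχ,
      hv h (hTP.torsion_sub hM₁).1 (hTP.free_sub hM₂).2 χ]; exact zero_comp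
  exact hTP.torsion_iso_closed (this.iso hM) hM₁

lemma mem_F_of_isZero {M : C} (hM : IsZero M) : M ∈ F := by
  obtain ⟨M₁, M₂, f, g, hh, hM₁, hM₂, hd⟩ := hTP.exists_ses 0
    ⟨mem_L_of_isZero h (isZero_zero C), mem_G_of_isZero h (isZero_zero C)⟩
  obtain ⟨ψ, hψ⟩ := Triangle.yoneda_exact₃ _ hd (𝟙 M₂) ((isZero_zero C).eq_of_src _ 0)
  have : IsZero M₂ := by
    rw [IsZero.iff_id_eq_zero, hψ,
      hvT' h (hTP.torsion_sub hM₁).1 (hTP.free_sub hM₂).2 ψ]; exact comp_zero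
  exact hTP.free_iso_closed (this.iso hM) hM₂

/-- torsion objects are the left orthogonal of `F` inside the heart. -/
lemma T_char {M : C} (hM : M ∈ L ∩ G) (hz : ∀ N ∈ F, Zer M N) : M ∈ T := by
  obtain ⟨M₁, M₂, f, g, hh, hM₁, hM₂, hd⟩ := hTP.exists_ses M hM
  have hg : g = 0 := hz M₂ hM₂ g
  obtain ⟨ψ, hψ⟩ := Triangle.yoneda_exact₃ _ hd (𝟙 M₂) (by show g ≫ 𝟙 M₂ = 0; rw [hg]; simp)
  have hψ0 : ψ = 0 := hvT' h (hTP.torsion_sub hM₁).1 (hTP.free_sub hM₂).2 ψ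
  have hid : 𝟙 M₂ = 0 := by rw [hψ, hψ0, comp_zero]; rfl
  have hh0 : hh = 0 := by calc hh = 𝟙 M₂ ≫ hh := by simp
                               _ = 0 := by rw [hid, zero_comp]
  have hz3 : IsZero ((Triangle.mk f g hh).obj₃) :=
    ((Triangle.mk f g hh).isZero₃_iff hd).2 ⟨hg, hh0⟩
  have : IsIso f := ((Triangle.mk f g hh).isZero₃_iff_isIso₁ hd).1 hz3
  exact hTP.torsion_iso_closed (asIso f) hM₁

/-- torsion-free objects are the right orthogonal of `T` inside the heart. -/
lemma F_char {M : C} (hM : M ∈ L ∩ G) (hz : ∀ N ∈ T, Zer N M) : M ∈ F := by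
  obtain ⟨M₁, M₂, f, g, hh, hM₁, hM₂, hd⟩ := hTP.exists_ses M hM
  have hf : f = 0 := hz M₁ hM₁ f
  obtain ⟨χ, hχ⟩ := Triangle.coyoneda_exact₂ _ (inv_rot_of_distTriang _ hd) (𝟙 M₁)
    (by show 𝟙 M₁ ≫ f = 0; rw [hf]; simp)
  have hzero : IsZero ((Triangle.mk f g hh).obj₁) := by
    rw [IsZero.iff_id_eq_zero]
    show 𝟙 M₁ = 0
    rw [hχ, hv h (hTP.torsion_sub hM₁).1 (hTP.free_sub hM₂).2 χ]; exact zero_comp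
  have : IsIso g := ((Triangle.mk f g hh).isZero₁_iff_isIso₂ hd).1 hzero
  exact hTP.free_iso_closed (asIso g).symm hM₂

end
end

section
variable {L G T F : Set C} (h : IsTStructure L G) (hTP : IsTorsionPairIn (L ∩ G) T F)
include h

/-- `Hom(L, Σ⁻²G) = 0` in a convenient form. -/
lemma hv2' {X Y : C} (hX : X ∈ L) (hY : Y⟦(1:ℤ)⟧ ∈ G) : Zer X (Y⟦(-1:ℤ)⟧) :=
  zer_of_iso_right ((shiftFunctor C (-1:ℤ)).mapIso (shiftShiftNeg Y (1:ℤ)))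
    (hv h hX (h.shift_coaisle _ hY))

include hTP

lemma tiltAisle_sub_L : tiltAisle L T ⊆ L := by
  rintro X ⟨A, B, f, g, hh, hd, hA, hB⟩
  exact extL h hd (memL_of_negshift h hA) (hTP.torsion_sub hB).1

lemma tilt_hom_vanish {X Z : C} (hX : X ∈ tiltAisle L T) (hZ : Z ∈ tiltCoaisle G F) :
    Zer X (Z⟦(-1:ℤ)⟧) := by
  obtain ⟨A, B, f, g, hh, hd, hA, hB⟩ := hX
  obtain ⟨A₂, B₂, f₂, g₂, hh₂, hd₂, hA₂, hB₂⟩ := hZ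
  obtain ⟨f₃, g₃, hh₃, hd₃⟩ := shift_tri_negone _ hd₂
  have hZA : Zer A (Z⟦(-1:ℤ)⟧) := zer_res_target hd₃
    (zSG h hA (hTP.free_sub hA₂).2) (zSG h hA (h.shift_coaisle _ hB₂))
  have hZB : Zer B (Z⟦(-1:ℤ)⟧) := zer_res_target hd₃
    (hTP.hom_vanish B _ hB hA₂) (hv h (hTP.torsion_sub hB).1 hB₂)
  exact zer_res_source hd hZA hZB

lemma tilt_exists_triangle (X : C) :
    ∃ (M' M'' : C) (f : M' ⟶ X) (g : X ⟶ M'') (hh : M'' ⟶ M'⟦(1:ℤ)⟧),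
      M' ∈ tiltAisle L T ∧ (M''⟦(1:ℤ)⟧) ∈ tiltCoaisle G F ∧
      Triangle.mk f g hh ∈ distTriang C := by
  obtain ⟨A, B, a, g, hX1, hdX, hA, hB⟩ := decompose_shift h X
  obtain ⟨H, B', u, v, hX2, hdB, hH, hB'⟩ := decompose_G h hB
  obtain ⟨T₀, F₀, i, p, hX3, hT₀, hF₀, hdH⟩ := hTP.exists_ses H hH
  obtain ⟨E, e, f', hdE⟩ := distinguished_cocone_triangle (i ≫ u)
  obtain ⟨P, π, δ, hdP⟩ := distinguished_cocone_triangle (g ≫ e)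
  have hAL : A ∈ L := memL_of_negshift h hA
  have hT₀L : T₀ ∈ L := (hTP.torsion_sub hT₀).1
  have hdX' := inv_rot_of_distTriang _ hdP
  have hdX'' := inv_rot_of_distTriang _ hdX'
  -- main vanishing out of E
  have claim1 : ∀ {W : C}, Zer (A⟦(1:ℤ)⟧) W → Zer (T₀⟦(1:ℤ)⟧) W →
      ∀ s' : E ⟶ W, (g ≫ e) ≫ s' = 0 → s' = 0 := by
    intro W hAW hTW s' hs'
    have h1 : (Triangle.mk a g hX1).mor₂ ≫ (e ≫ s') = 0 := by
      show g ≫ (e ≫ s') = 0; rw [← Category.assoc]; exact hs'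
    obtain ⟨η, hη⟩ := Triangle.yoneda_exact₃ _ hdX (e ≫ s') h1
    have he : e ≫ s' = 0 := by exact hη.trans (by rw [hAW η]; exact comp_zero)
    obtain ⟨σ, hσ⟩ := Triangle.yoneda_exact₃ _ hdE s' he
    rw [hσ, hTW σ]; exact comp_zero
  have claimPi : ∀ {W : C}, Zer (A⟦(1:ℤ)⟧) W → Zer (T₀⟦(1:ℤ)⟧) W →
      ∀ w : P ⟶ W, π ≫ w = 0 := by
    intro W hAW hTW w
    refine claim1 hAW hTW (π ≫ w) ?_
    have h0 : (g ≫ e) ≫ π = 0 := comp_distTriang_mor_zero₁₂ _ hdP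
    rw [← Category.assoc, h0, zero_comp]
  -- main vanishing out of `P⟦-1⟧`
  have mainZer : ∀ {V : C}, Zer (A⟦(1:ℤ)⟧) (V⟦(1:ℤ)⟧) → Zer (T₀⟦(1:ℤ)⟧) (V⟦(1:ℤ)⟧) →
      Zer A V → Zer T₀ V → Zer (P⟦(-1:ℤ)⟧) V := by
    intro V h1 h2 h3 h4 f
    have hpi : ∀ vv : P⟦(-1:ℤ)⟧ ⟶ V, π⟦(-1:ℤ)⟧' ≫ vv = 0 := by
      intro vv
      have base := comp_map_zero (-1) π (claimPi h1 h2) (vv ≫ (shiftShiftNeg V (1:ℤ)).inv)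
      have h' : (π⟦(-1:ℤ)⟧' ≫ vv) ≫ (shiftShiftNeg V (1:ℤ)).inv = 0 := by
        rw [Category.assoc]; exact base
      calc π⟦(-1:ℤ)⟧' ≫ vv
          = ((π⟦(-1:ℤ)⟧' ≫ vv) ≫ (shiftShiftNeg V (1:ℤ)).inv) ≫ (shiftShiftNeg V (1:ℤ)).hom := by
            rw [Category.assoc, Iso.inv_hom_id, Category.comp_id]
        _ = 0 := by rw [h', zero_comp]
    have hstep : ((Triangle.mk (g ≫ e) π δ).invRotate.invRotate).mor₁ ≫ f = 0 := by
      dsimp [Triangle.invRotate]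
      erw [Functor.map_comp, Preadditive.neg_comp, Category.assoc, neg_eq_zero]
      exact (Category.assoc _ _ _).trans (hpi _)
    obtain ⟨t, ht⟩ := Triangle.yoneda_exact₂ _ hdX'' f hstep
    obtain ⟨t₁, ht₁⟩ := Triangle.yoneda_exact₂ _ hdX t (h3 _)
    obtain ⟨w, hw⟩ := Triangle.yoneda_exact₂ _ hdE t₁ (h4 _)
    have hz : ((Triangle.mk (g ≫ e) π δ).invRotate).mor₁ ≫ (g ≫ e) = 0 :=
      comp_distTriang_mor_zero₁₂ _ hdX'
    have hz2 : (((Triangle.mk (g ≫ e) π δ).invRotate.invRotate.mor₂ ≫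
        (Triangle.mk a g hX1).mor₂) ≫ (Triangle.mk (i ≫ u) e f').mor₂) = 0 := by
      exact (Category.assoc _ _ _).trans hz
    rw [ht, ht₁, hw]
    exact ((Category.assoc _ _ _).trans (Category.assoc _ _ _)).symm.trans ((congrArg (· ≫ w) hz2).trans zero_comp)
  -- `P⟦-1⟧ ∈ L`
  have hPL : P⟦(-1:ℤ)⟧ ∈ L := by
    refine mem_L_of_zer h (fun Y hY => ?_)
    exact mainZer
      (zer_of_iso_right (shiftNegShift Y (1:ℤ)).symm (hvT' h hAL hY))
      (zer_of_iso_right (shiftNegShift Y (1:ℤ)).symm (hvT' h hT₀L hY))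
      (zSG h hA (h.shift_coaisle _ hY))
      (hv h hT₀L hY)
  -- maps from `P⟦-1⟧` to torsion-free objects vanish
  have hZF : ∀ F'' ∈ F, Zer (P⟦(-1:ℤ)⟧) F'' := by
    intro F'' hF''
    have hFG : F'' ∈ G := (hTP.free_sub hF'').2
    exact mainZer (zer_shift 1 (zSG h hA hFG)) (zer_shift 1 (hTP.hom_vanish _ _ hT₀ hF''))
      (zSG h hA hFG) (hTP.hom_vanish _ _ hT₀ hF'')
  -- `P⟦-1⟧` lies in the tilted aisle
  have hPaisle : P⟦(-1:ℤ)⟧ ∈ tiltAisle L T := by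
    obtain ⟨X₁', H', f₁, p', hh', hd', hX₁', hH'⟩ := decompose_L h hPL
    have hH'T : H' ∈ T := by
      refine T_char h hTP hH' (fun F'' hF'' φ => ?_)
      obtain ⟨ρ, hρ⟩ := Triangle.yoneda_exact₃ _ hd' φ (hZF F'' hF'' _)
      rw [hρ, hvT' h (memL_of_negshift h hX₁') (hTP.free_sub hF'').2 ρ]; exact comp_zero
    exact ⟨X₁', H', f₁, p', hh', hd', hX₁', hH'T⟩
  -- factorisation of maps into `E`
  have toE_fac : ∀ {W₁ : C} (fE : W₁ ⟶ E), Zer (W₁⟦(-1:ℤ)⟧) (B'⟦(-1:ℤ)⟧) →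
      Zer (W₁⟦(-1:ℤ)⟧) (F₀⟦(-1:ℤ)⟧) → ∃ β : W₁ ⟶ B, fE = β ≫ e := by
    intro W₁ fE hzB' hzF₀
    have hφc : (fE ≫ f') ≫ (i ≫ u)⟦(1:ℤ)⟧' = 0 := by
      have h0 : f' ≫ (i ≫ u)⟦(1:ℤ)⟧' = 0 := comp_distTriang_mor_zero₃₁ _ hdE
      rw [Category.assoc, h0, comp_zero]
    have hnat : (shiftShiftNeg T₀ (1:ℤ)).hom ≫ (i ≫ u) =
        ((i ≫ u)⟦(1:ℤ)⟧')⟦(-1:ℤ)⟧' ≫ (shiftShiftNeg B (1:ℤ)).hom := by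
      exact ((shiftFunctorCompIsoId C (1:ℤ) (-1) (add_neg_cancel 1)).hom.naturality (i ≫ u)).symm
    have hψc0 : ((fE ≫ f')⟦(-1:ℤ)⟧' ≫ (shiftShiftNeg T₀ (1:ℤ)).hom) ≫ (i ≫ u) = 0 := by
      rw [Category.assoc, hnat, ← Category.assoc, ← Functor.map_comp, hφc,
        Functor.map_zero, zero_comp]
    have hψc : (((fE ≫ f')⟦(-1:ℤ)⟧' ≫ (shiftShiftNeg T₀ (1:ℤ)).hom) ≫ i) ≫ u = 0 := by
      simp only [Category.assoc] at hψc0 ⊢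
      exact hψc0
    obtain ⟨χ, hχ⟩ := Triangle.coyoneda_exact₂ _ (inv_rot_of_distTriang _ hdB)
      (((fE ≫ f')⟦(-1:ℤ)⟧' ≫ (shiftShiftNeg T₀ (1:ℤ)).hom) ≫ i) hψc
    have h2 : ((fE ≫ f')⟦(-1:ℤ)⟧' ≫ (shiftShiftNeg T₀ (1:ℤ)).hom) ≫ i = 0 := by
      exact hχ.trans (by rw [hzB' χ]; exact zero_comp)
    obtain ⟨χ₂, hχ₂⟩ := Triangle.coyoneda_exact₂ _ (inv_rot_of_distTriang _ hdH)
      ((fE ≫ f')⟦(-1:ℤ)⟧' ≫ (shiftShiftNeg T₀ (1:ℤ)).hom) h2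
    have hψ0 : (fE ≫ f')⟦(-1:ℤ)⟧' ≫ (shiftShiftNeg T₀ (1:ℤ)).hom = 0 := by
      exact hχ₂.trans (by rw [hzF₀ χ₂]; exact zero_comp)
    have hφ0 : fE ≫ f' = 0 := by
      have hm : (fE ≫ f')⟦(-1:ℤ)⟧' = 0 := by
        calc (fE ≫ f')⟦(-1:ℤ)⟧'
            = ((fE ≫ f')⟦(-1:ℤ)⟧' ≫ (shiftShiftNeg T₀ (1:ℤ)).hom) ≫
                (shiftShiftNeg T₀ (1:ℤ)).inv := by rw [Category.assoc, Iso.hom_inv_id, Category.comp_id]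
          _ = 0 := by rw [hψ0, zero_comp]
      exact (shiftFunctor C (-1:ℤ)).map_injective (by rw [hm, Functor.map_zero])
    exact Triangle.coyoneda_exact₃ _ hdE fE hφ0
  -- `E ∈ G`
  have hEG : E ∈ G := by
    refine mem_G_of_zer h (fun X₀ hX₀ f => ?_)
    have hfe : (f⟦(1:ℤ)⟧' ≫ (shiftNegShift E (1:ℤ)).hom) = 0 := by
      obtain ⟨β, hβ⟩ := toE_fac (f⟦(1:ℤ)⟧' ≫ (shiftNegShift E (1:ℤ)).hom)
        (zer_of_iso_left (shiftShiftNeg X₀ (1:ℤ)).symm (hv2' h hX₀ hB'))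
        (zer_of_iso_left (shiftShiftNeg X₀ (1:ℤ)).symm (hv h hX₀ (hTP.free_sub hF₀).2))
      rw [hβ, hvT' h hX₀ hB β, zero_comp]
    have hf1 : f⟦(1:ℤ)⟧' = 0 := by
      calc f⟦(1:ℤ)⟧'
          = (f⟦(1:ℤ)⟧' ≫ (shiftNegShift E (1:ℤ)).hom) ≫ (shiftNegShift E (1:ℤ)).inv := by rw [Category.assoc, Iso.hom_inv_id, Category.comp_id]
        _ = 0 := by rw [hfe, zero_comp]
    exact (shiftFunctor C (1:ℤ)).map_injective (by rw [hf1, Functor.map_zero])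
  -- decompose `E` and show its heart part is torsion-free
  obtain ⟨HE, E', uE, vE, hhE, hdEG, hHE, hE'⟩ := decompose_G h hEG
  have hT'E : ∀ T'' ∈ T, Zer T'' E := by
    intro T'' hT'' fT
    have hT''L : T'' ∈ L := (hTP.torsion_sub hT'').1
    have hzB'' : Zer T'' B' := zer_of_iso_right (shiftShiftNeg B' (1:ℤ)) (hv h hT''L hB')
    obtain ⟨β, hβ⟩ := toE_fac fT (zer_shift (-1) hzB'')
      (zer_shift (-1) (hTP.hom_vanish _ _ hT'' hF₀))
    obtain ⟨γ, hγ⟩ := Triangle.coyoneda_exact₂ _ hdB β (hzB'' _)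
    obtain ⟨δ', hδ'⟩ := Triangle.coyoneda_exact₂ _ hdH γ (hTP.hom_vanish _ _ hT'' hF₀ _)
    have h0 : (i ≫ u) ≫ e = 0 := comp_distTriang_mor_zero₁₂ _ hdE
    have h0' : (Triangle.mk i p hX3).mor₁ ≫ ((Triangle.mk u v hX2).mor₁ ≫ e) = 0 := by
      exact (Category.assoc _ _ _).symm.trans h0
    rw [hβ, hγ, hδ']
    exact ((Category.assoc _ _ _).trans (Category.assoc _ _ _)).trans ((congrArg (δ' ≫ ·) h0').trans comp_zero)
  have hHEF : HE ∈ F := by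
    refine F_char h hTP hHE (fun T'' hT'' f => ?_)
    have hfu : f ≫ ((Triangle.mk uE vE hhE).invRotate).mor₂ = 0 := hT'E T'' hT'' _
    obtain ⟨χ, hχ⟩ := Triangle.coyoneda_exact₂ _ (inv_rot_of_distTriang _ hdEG) f hfu
    rw [hχ, hv2' h (hTP.torsion_sub hT'').1 hE' χ]; exact zero_comp
  -- assemble
  obtain ⟨s1, s2, s3, hdS⟩ := shift_tri_one _ hdEG
  refine ⟨P⟦(-1:ℤ)⟧, E, (Triangle.mk (g ≫ e) π δ).invRotate.mor₁, g ≫ e,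
    (Triangle.mk (g ≫ e) π δ).invRotate.mor₃, hPaisle, ?_, hdX'⟩
  exact ⟨HE⟦(1:ℤ)⟧, E'⟦(1:ℤ)⟧, s1, s2, s3, hdS,
    hTP.free_iso_closed (shiftShiftNeg HE (1:ℤ)).symm hHEF, hE'⟩


lemma tilt_shift_aisle {X : C} (hX : X ∈ tiltAisle L T) : X⟦(1:ℤ)⟧ ∈ tiltAisle L T := by
  have hXL : X ∈ L := tiltAisle_sub_L h hTP hX
  exact ⟨X⟦(1:ℤ)⟧, 0, 𝟙 _, 0, 0, contractible_distinguished _,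
    memL_shiftshiftneg h hXL, mem_T_of_isZero h hTP (isZero_zero C)⟩

lemma tilt_shift_coaisle {Z : C} (hZ : Z ∈ tiltCoaisle G F) :
    Z⟦(-1:ℤ)⟧ ∈ tiltCoaisle G F := by
  obtain ⟨A, B, f, g, hh, hd, hA, hB⟩ := hZ
  obtain ⟨s1, s2, s3, hds⟩ := shift_tri_negone _ hd
  have hZG : Z⟦(-1:ℤ)⟧ ∈ G := extG h hds (hTP.free_sub hA).2 (h.shift_coaisle _ hB)
  exact ⟨(0:C)⟦(-1:ℤ)⟧, Z⟦(-1:ℤ)⟧, _, _, _,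
    inv_rot_of_distTriang _ (contractible_distinguished (Z⟦(-1:ℤ)⟧)),
    mem_F_of_isZero h hTP (isZero_shift _ (isZero_shift _ (isZero_zero C))), hZG⟩

lemma tilt_intermediate : Intermediate L (tiltAisle L T) := by
  constructor
  · intro X hX
    exact ⟨X, 0, 𝟙 X, 0, 0, contractible_distinguished X, hX,
      mem_T_of_isZero h hTP (isZero_zero C)⟩
  · exact tiltAisle_sub_L h hTP

lemma part3_a : tiltAisle L T ∩ (L ∩ G) = T := by
  apply Set.Subset.antisymm
  · rintro M ⟨⟨A, B, f, g, hh, hd, hA, hB⟩, hM⟩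
    refine T_char h hTP hM (fun N hN φ => ?_)
    obtain ⟨ψ, hψ⟩ := Triangle.yoneda_exact₂ _ hd φ (zSG h hA (hTP.free_sub hN).2 _)
    rw [hψ, hTP.hom_vanish _ _ hB hN ψ]; exact comp_zero
  · intro M hM
    exact ⟨⟨(0:C)⟦(-1:ℤ)⟧, M, _, _, _,
      inv_rot_of_distTriang _ (contractible_distinguished M),
      mem_L_of_isZero h (isZero_shift _ (isZero_shift _ (isZero_zero C))), hM⟩,
      hTP.torsion_sub hM⟩

lemma part3_b : unshiftSet (tiltCoaisle G F) ∩ (L ∩ G) = F := by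
  apply Set.Subset.antisymm
  · rintro M ⟨hM1, hM⟩
    obtain ⟨A, B, f, g, hh, hd, hA, hB⟩ := hM1
    refine F_char h hTP hM (fun N hN φ => ?_)
    obtain ⟨s1, s2, s3, hds⟩ := shift_tri_negone _ hd
    have hρ : Zer N ((M⟦(1:ℤ)⟧)⟦(-1:ℤ)⟧) := zer_res_target hds
      (hTP.hom_vanish _ _ hN hA) (hv h (hTP.torsion_sub hN).1 hB)
    have h0 := hρ (φ ≫ (shiftShiftNeg M (1:ℤ)).inv)
    calc φ = (φ ≫ (shiftShiftNeg M (1:ℤ)).inv) ≫ (shiftShiftNeg M (1:ℤ)).hom := by rw [Category.assoc, Iso.inv_hom_id, Category.comp_id]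
      _ = 0 := by rw [h0, zero_comp]
  · intro M hM
    exact ⟨⟨M⟦(1:ℤ)⟧, (0:C), 𝟙 _, 0, 0, contractible_distinguished _,
      hTP.free_iso_closed (shiftShiftNeg M (1:ℤ)).symm hM, mem_G_of_isZero h (isZero_zero C)⟩,
      hTP.free_sub hM⟩

end

lemma tiltAisle_iso {L T : Set C} {X Y : C} (e : X ≅ Y) (hX : X ∈ tiltAisle L T) :
    Y ∈ tiltAisle L T := by
  obtain ⟨A, B, f, g, hh, hd, hA, hB⟩ := hX
  exact ⟨A, B, f ≫ e.hom, e.inv ≫ g, hh, tri_iso₂ hd e, hA, hB⟩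

lemma tiltCoaisle_iso {G F : Set C} {X Y : C} (e : X ≅ Y) (hX : X ∈ tiltCoaisle G F) :
    Y ∈ tiltCoaisle G F := by
  obtain ⟨A, B, f, g, hh, hd, hA, hB⟩ := hX
  exact ⟨A, B, f ≫ e.hom, e.inv ≫ g, hh, tri_iso₂ hd e, hA, hB⟩

section
variable {L G L' G' : Set C} (h : IsTStructure L G) (h' : IsTStructure L' G')
  (hint : Intermediate L L')
include h h' hint

lemma shiftL_sub {X : C} (hX : X ∈ L) : X⟦(1:ℤ)⟧ ∈ L' :=
  hint.1 (memL_shiftshiftneg h hX)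

lemma G'_shift {Y : C} (hY : Y ∈ G') : Y⟦(-1:ℤ)⟧ ∈ G := by
  refine mem_G_of_zer h (fun X hX => ?_)
  have hz : Zer (X⟦(1:ℤ)⟧) (Y⟦(-1:ℤ)⟧) := h'.hom_vanish _ _ (shiftL_sub h h' hint hX) hY
  exact zer_of_iso_left (shiftShiftNeg X (1:ℤ)) (zer_shift (-1) hz)

lemma part2_tp : IsTorsionPairIn (L ∩ G) (L' ∩ (L ∩ G)) (unshiftSet G' ∩ (L ∩ G)) := by
  constructor
  · exact Set.inter_subset_right
  · exact Set.inter_subset_right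
  · rintro X Y e ⟨h1, h2, h3⟩
    exact ⟨h'.aisle_iso_closed e h1, h.aisle_iso_closed e h2, h.coaisle_iso_closed e h3⟩
  · rintro X Y e ⟨h1, h2, h3⟩
    exact ⟨h'.coaisle_iso_closed ((shiftFunctor C (1:ℤ)).mapIso e) h1,
      h.aisle_iso_closed e h2, h.coaisle_iso_closed e h3⟩
  · rintro X Y ⟨hX1, _⟩ ⟨hY1, _⟩ f
    have h0 := h'.hom_vanish X (Y⟦(1:ℤ)⟧) hX1 hY1 (f ≫ (shiftShiftNeg Y (1:ℤ)).inv)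
    calc f = (f ≫ (shiftShiftNeg Y (1:ℤ)).inv) ≫ (shiftShiftNeg Y (1:ℤ)).hom := by rw [Category.assoc, Iso.inv_hom_id, Category.comp_id]
      _ = 0 := by rw [h0, zero_comp]
  · intro M hM
    obtain ⟨M₁, M₂, f, g, hh, hM₁, hM₂, hd⟩ := h'.exists_triangle M
    have hM₁L : M₁ ∈ L := hint.2 hM₁
    have hM₂G : M₂ ∈ G :=
      h.coaisle_iso_closed (shiftShiftNeg M₂ (1:ℤ)) (G'_shift h h' hint hM₂)
    have hM₁G : M₁ ∈ G := by
      refine mem_G_of_zer h (fun X hX => ?_)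
      obtain ⟨s1, s2, s3, hds⟩ := shift_tri_negone _ (inv_rot_of_distTriang _ hd)
      exact zer_res_target hds (hv h hX (h.shift_coaisle _ hM₂G)) (hv h hX hM.2)
    have hM₂L : M₂ ∈ L := by
      refine mem_L_of_zer h (fun Y hY f₂ => ?_)
      obtain ⟨ψ, hψ⟩ := Triangle.yoneda_exact₃ _ hd f₂ (hv h hM.1 hY _)
      rw [hψ, hvT' h hM₁L (h.shift_coaisle _ hY) ψ]; exact comp_zero
    exact ⟨M₁, M₂, f, g, hh, ⟨hM₁, hM₁L, hM₁G⟩, ⟨hM₂, hM₂L, hM₂G⟩, hd⟩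

lemma part2_aisle : tiltAisle L (L' ∩ (L ∩ G)) = L' := by
  apply Set.Subset.antisymm
  · rintro X ⟨A, B, f, g, hh, hd, hA, hB⟩
    exact extL h' hd (hint.1 hA) hB.1
  · intro X hX
    obtain ⟨X₁, H₀, f, g, hh, hd, hX₁, hH₀⟩ := decompose_L h (hint.2 hX)
    have hH₀L' : H₀ ∈ L' := by
      refine mem_L_of_zer h' (fun Y' hY' φ => ?_)
      obtain ⟨ψ, hψ⟩ := Triangle.yoneda_exact₃ _ hd φ (h'.hom_vanish _ _ hX hY' _)
      rw [hψ, h'.hom_vanish _ _ (h'.shift_aisle _ (hint.1 hX₁)) hY' ψ]; exact comp_zero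
    exact ⟨X₁, H₀, f, g, hh, hd, hX₁, ⟨hH₀L', hH₀⟩⟩

lemma part2_coaisle : tiltCoaisle G (unshiftSet G' ∩ (L ∩ G)) = G' := by
  apply Set.Subset.antisymm
  · rintro Z ⟨A, B, f, g, hh, hd, hA, hB⟩
    refine mem_G_of_zer h' (fun X hX => ?_)
    obtain ⟨s1, s2, s3, hds⟩ := shift_tri_negone _ hd
    refine zer_res_target hds ?_ (hv h (hint.2 hX) hB)
    exact zer_of_iso_right (shiftShiftNeg (A⟦(-1:ℤ)⟧) (1:ℤ))
      (h'.hom_vanish X ((A⟦(-1:ℤ)⟧)⟦(1:ℤ)⟧) hX hA.1)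
  · intro Z hZ
    have hW : Z⟦(-1:ℤ)⟧ ∈ G := G'_shift h h' hint hZ
    obtain ⟨HW, W', uW, vW, hhW, hdW, hHW, hW'⟩ := decompose_G h hW
    have hHWG' : (HW⟦(1:ℤ)⟧) ∈ G' := by
      refine mem_G_of_zer h' (fun X hX => ?_)
      refine zer_of_iso_right (shiftShiftNeg HW (1:ℤ)).symm (fun f => ?_)
      have hfu : f ≫ ((Triangle.mk uW vW hhW).invRotate).mor₂ = 0 :=
        h'.hom_vanish _ _ hX hZ _
      obtain ⟨χ, hχ⟩ := Triangle.coyoneda_exact₂ _ (inv_rot_of_distTriang _ hdW) f hfu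
      rw [hχ, hv2' h (hint.2 hX) hW' χ]; exact zero_comp
    obtain ⟨s1, s2, s3, hds⟩ := shift_tri_one _ hdW
    have hds2 := tri_iso₂ hds (shiftNegShift Z (1:ℤ))
    have e : HW ≅ (HW⟦(1:ℤ)⟧)⟦(-1:ℤ)⟧ := (shiftShiftNeg HW (1:ℤ)).symm
    exact ⟨HW⟦(1:ℤ)⟧, W'⟦(1:ℤ)⟧, _, _, _, hds2,
      ⟨h'.coaisle_iso_closed ((shiftFunctor C (1:ℤ)).mapIso e) hHWG',
        h.aisle_iso_closed e hHW.1, h.coaisle_iso_closed e hHW.2⟩, hW'⟩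

end

-- SENTINEL

end Stmt9Aux

open Stmt9


theorem stmt9 {C : Type u} [Category.{v} C] [HasZeroObject C] [Preadditive C] [HasShift C ℤ]
    [∀ n : ℤ, (shiftFunctor C n).Additive] [Pretriangulated C]
    (L G : Set C) (h : IsTStructure L G) (hb : IsBoundedTStructure L G) :
    -- the HRS tilt of a torsion pair is an intermediate t-structure
    (∀ T F : Set C, IsTorsionPairIn (L ∩ G) T F →
      IsTStructure (tiltAisle L T) (tiltCoaisle G F) ∧
        Intermediate L (tiltAisle L T)) ∧
    -- surjectivity, with the prescribed inverse:  every intermediate t-structure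
    -- arises as the tilt of the torsion pair `(C'^{≤0} ∩ A, (Σ⁻¹C'^{≥0}) ∩ A)`
    (∀ L' G' : Set C, IsTStructure L' G' → Intermediate L L' →
      IsTorsionPairIn (L ∩ G) (L' ∩ (L ∩ G)) (unshiftSet G' ∩ (L ∩ G)) ∧
        tiltAisle L (L' ∩ (L ∩ G)) = L' ∧
        tiltCoaisle G (unshiftSet G' ∩ (L ∩ G)) = G') ∧
    -- injectivity:  the prescribed inverse recovers the torsion pair from its tilt
    (∀ T F : Set C, IsTorsionPairIn (L ∩ G) T F →
      tiltAisle L T ∩ (L ∩ G) = T ∧ unshiftSet (tiltCoaisle G F) ∩ (L ∩ G) = F) := by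
  refine ⟨?_, ?_, ?_⟩
  · intro T F hTP
    refine ⟨⟨?_, ?_, ?_, ?_, ?_, ?_⟩, Stmt9Aux.tilt_intermediate h hTP⟩
    · exact fun X Y e hX => Stmt9Aux.tiltAisle_iso e hX
    · exact fun X Y e hX => Stmt9Aux.tiltCoaisle_iso e hX
    · exact fun X hX => Stmt9Aux.tilt_shift_aisle h hTP hX
    · exact fun Z hZ => Stmt9Aux.tilt_shift_coaisle h hTP hZ
    · exact fun X Z hX hZ => Stmt9Aux.tilt_hom_vanish h hTP hX hZ
    · exact fun X => Stmt9Aux.tilt_exists_triangle h hTP X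
  · intro L' G' h' hint
    exact ⟨Stmt9Aux.part2_tp h h' hint, Stmt9Aux.part2_aisle h h' hint,
      Stmt9Aux.part2_coaisle h h' hint⟩
  · intro T F hTP
    exact ⟨Stmt9Aux.part3_a h hTP, Stmt9Aux.part3_b h hTP⟩
end
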